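/- arXiv:1504.02410 — 5 statements merged into one kernel-verified Lean document; each statement's English description precedes it below -/
import Mathlib

section
/- Let α be a real number, let N be an odd positive integer, let k be an even positive integer, let m be an odd integer, and let δ ∈ (0,1) be such that ‖Nα − m/k‖ < (1−δ)/(kN). If ε : ℕ → ℝ satisfies ε(n) ≤ δ/(2k) for all n, then N is not the sum of two elements of A(ε,α); that is, there do not exist n₁, n₂ ∈ A(ε,α) with n₁ + n₂ = N. -/
open Filter

/-- Distance to the nearest integer. -/
noncomputable def fpa (t : ℝ) : ℝ := |t - round t|

/-- `A ε α = {n ∈ ℕ : ‖α n²‖ ≤ ε n}`. -/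
def A (ε : ℕ → ℝ) (α : ℝ) : Set ℕ := {n : ℕ | fpa (α * (n : ℝ) ^ 2) ≤ ε n}

theorem stmt_0 (α : ℝ) (N k : ℕ) (m : ℤ) (δ : ℝ)
    (hN : 0 < N) (hNodd : Odd N) (hk : 0 < k) (hkeven : Even k) (hmodd : Odd m)
    (hδ : δ ∈ Set.Ioo (0 : ℝ) 1)
    (happrox : fpa ((N : ℝ) * α - (m : ℝ) / (k : ℝ)) < (1 - δ) / ((k : ℝ) * (N : ℝ)))
    (ε : ℕ → ℝ) (hε : ∀ n, ε n ≤ δ / (2 * (k : ℝ))) :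
    ¬ ∃ n₁ ∈ A ε α, ∃ n₂ ∈ A ε α, n₁ + n₂ = N := by
  rintro ⟨n₁, h₁, n₂, h₂, hsum⟩
  obtain ⟨hδ0, hδ1⟩ := hδ
  have hk0 : (0:ℝ) < k := by exact_mod_cast hk
  have hN0 : (0:ℝ) < N := by exact_mod_cast hN
  set a₁ : ℤ := round (α * (n₁:ℝ)^2) with ha₁
  set a₂ : ℤ := round (α * (n₂:ℝ)^2) with ha₂
  set r : ℤ := round ((N:ℝ) * α - (m:ℝ) / (k:ℝ)) with hr
  set θ : ℝ := (N:ℝ) * α - (m:ℝ) / (k:ℝ) - r with hθ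
  have he₁ : |α * (n₁:ℝ)^2 - a₁| ≤ δ / (2*k) := le_trans h₁ (hε n₁)
  have he₂ : |α * (n₂:ℝ)^2 - a₂| ≤ δ / (2*k) := le_trans h₂ (hε n₂)
  have hθb : |θ| < (1 - δ) / (k * N) := happrox
  have hn₂ : (n₂:ℝ) = (N:ℝ) - (n₁:ℝ) := by
    have : (n₁:ℝ) + (n₂:ℝ) = N := by exact_mod_cast congrArg (Nat.cast : ℕ → ℝ) hsum
    linarith
  set c : ℤ := (N:ℤ) - 2 * (n₁:ℤ) with hc
  set O : ℤ := c * (m + k * r) + (k:ℤ) * a₁ - (k:ℤ) * a₂ with hO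
  have key : (O:ℝ) = (k:ℝ) * (α * (n₂:ℝ)^2 - a₂) - (k:ℝ) * (α * (n₁:ℝ)^2 - a₁)
      - (c:ℝ) * ((k:ℝ) * θ) := by
    rw [hθ, hn₂, hO, hc]
    push_cast
    field_simp
    ring
  -- O is an odd integer
  have hOodd : Odd O := by
    have hcodd : Odd c := by
      refine Odd.sub_even ?_ (even_two_mul _)
      exact_mod_cast hNodd
    have hkz : Even (k:ℤ) := by exact_mod_cast hkeven
    have h1 : Odd (c * (m + (k:ℤ) * r)) :=
      hcodd.mul (hmodd.add_even (hkz.mul_right r))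
    have h2 : Even ((k:ℤ) * a₁ - (k:ℤ) * a₂) := (hkz.mul_right a₁).sub (hkz.mul_right a₂)
    have := h1.add_even h2
    convert this using 1
    ring
  have hO1 : (1:ℝ) ≤ |(O:ℝ)| := by
    have hne : O ≠ 0 := by
      intro h
      rw [h] at hOodd
      exact (Int.not_odd_iff_even.mpr Even.zero) hOodd
    have := Int.one_le_abs hne
    rw [← Int.cast_abs]
    exact_mod_cast this
  -- bound |O| < 1
  have hcb : |(c:ℝ)| ≤ N := by
    have hzc : |c| ≤ (N:ℤ) := by
      rw [hc]
      have hn₁N : n₁ ≤ N := by omega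
      have : (n₁:ℤ) ≤ N := by exact_mod_cast hn₁N
      have : (0:ℤ) ≤ (n₁:ℤ) := Int.ofNat_nonneg _
      rw [abs_le]; omega
    rw [← Int.cast_abs]
    exact_mod_cast hzc
  have hterm : |(c:ℝ)| * ((k:ℝ) * |θ|) < 1 - δ := by
    have hθ0 : 0 ≤ |θ| := abs_nonneg _
    calc |(c:ℝ)| * ((k:ℝ) * |θ|) ≤ (N:ℝ) * ((k:ℝ) * |θ|) := by
          apply mul_le_mul_of_nonneg_right hcb; positivity
      _ < (N:ℝ) * ((k:ℝ) * ((1 - δ) / (k * N))) := by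
          apply mul_lt_mul_of_pos_left _ hN0
          exact mul_lt_mul_of_pos_left hθb hk0
      _ = 1 - δ := by field_simp
  have hb : |(O:ℝ)| < 1 := by
    calc |(O:ℝ)| ≤ (k:ℝ) * |α * (n₂:ℝ)^2 - a₂| + (k:ℝ) * |α * (n₁:ℝ)^2 - a₁|
        + |(c:ℝ)| * ((k:ℝ) * |θ|) := by
          rw [key]
          refine (abs_sub _ _).trans ?_
          gcongr
          · refine (abs_sub _ _).trans ?_
            rw [abs_mul, abs_mul]
            simp [abs_of_pos hk0]
          · rw [abs_mul, abs_mul, abs_of_pos hk0]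
      _ < 1 := by
          have b1 : (k:ℝ) * |α * (n₁:ℝ)^2 - a₁| ≤ δ / 2 := by
            rw [show δ/2 = (k:ℝ) * (δ / (2*k)) by field_simp]
            exact mul_le_mul_of_nonneg_left he₁ hk0.le
          have b2 : (k:ℝ) * |α * (n₂:ℝ)^2 - a₂| ≤ δ / 2 := by
            rw [show δ/2 = (k:ℝ) * (δ / (2*k)) by field_simp]
            exact mul_le_mul_of_nonneg_left he₂ hk0.le
          linarith
  linarith
end

section
/- Let α be a real number and let ε : ℕ → ℝ satisfy ε(n) → 0 as n → ∞. Let (N_i) be a strictly increasing sequence of odd positive integers, let k be an even positive integer, and let (m_i) be odd integers and (γ_i) real numbers such that N_i·α = m_i/k + γ_i/(k·N_i) for every i. Suppose γ ∈ ℝ with |γ| < 1 is an accumulation point of the sequence (γ_i) (i.e. some subsequence of (γ_i) converges to γ), and suppose that there is no n ∈ ℕ with γ + k·n²·α ∈ ℤ. Then there are infinitely many indices i for which N_i is not a sum of two elements of A(ε,α). -/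
open Filter

lemma fpa_le (t : ℝ) (z : ℤ) : fpa t ≤ |t - z| := round_le t z

lemma fpa_nonneg (t : ℝ) : 0 ≤ fpa t := abs_nonneg _

lemma fpa_sub_int (t : ℝ) (z : ℤ) : fpa (t - z) = fpa t := by
  unfold fpa; rw [round_sub_intCast]; push_cast; ring_nf

lemma fpa_neg (x : ℝ) : fpa (-x) = fpa x := by
  apply le_antisymm
  · calc fpa (-x) ≤ |-x - ((-round x : ℤ):ℝ)| := fpa_le _ _
      _ = fpa x := by
          push_cast
          rw [show -x - -(round x:ℝ) = -(x - round x) by ring, abs_neg]; rfl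
  · calc fpa x ≤ |x - ((-(round (-x)) : ℤ):ℝ)| := fpa_le _ _
      _ = fpa (-x) := by
          push_cast
          rw [show x - -(round (-x):ℝ) = -(-x - round (-x)) by ring, abs_neg]; rfl

lemma fpa_add_le (x y : ℝ) : fpa (x + y) ≤ fpa x + fpa y := by
  calc fpa (x + y) ≤ |x + y - (round x + round y : ℤ)| := fpa_le _ _
    _ ≤ |x - round x| + |y - round y| := by
        push_cast
        rw [show x + y - ((round x:ℝ) + round y) = (x - round x) + (y - round y) by ring]
        exact abs_add_le _ _
    _ = fpa x + fpa y := rfl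

lemma fpa_sub_le (x y : ℝ) : fpa (x - y) ≤ fpa x + fpa y := by
  rw [sub_eq_add_neg, ← fpa_neg y] ; exact fpa_add_le x (-y)

lemma fpa_le_fpa_add_abs (x y : ℝ) : fpa (x + y) ≤ fpa x + |y| := by
  calc fpa (x + y) ≤ |x + y - (round x : ℤ)| := fpa_le _ _
    _ ≤ |x - round x| + |y| := by
        rw [show x + y - (round x:ℝ) = (x - round x) + y by ring]; exact abs_add_le _ _
    _ = fpa x + |y| := rfl

lemma fpa_nat_mul (k : ℕ) (x : ℝ) : fpa (k * x) ≤ k * fpa x := by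
  calc fpa (k * x) ≤ |k * x - ((k * round x : ℤ) : ℝ)| := fpa_le _ _
    _ = k * |x - round x| := by
        push_cast
        rw [show (k:ℝ)*x - k*round x = k * (x - round x) by ring, abs_mul,
          abs_of_nonneg (by positivity : (0:ℝ) ≤ (k:ℝ))]
    _ = k * fpa x := rfl

lemma fpa_pos {t : ℝ} (h : ∀ z : ℤ, t ≠ z) : 0 < fpa t := by
  rcases (fpa_nonneg t).lt_or_eq with h' | h'
  · exact h'
  · exact absurd (sub_eq_zero.mp (abs_eq_zero.mp h'.symm)) (h (round t))

lemma fpa_odd_div {a : ℤ} {k : ℕ} (ha : Odd a) (hk : 0 < k) (hke : Even k) :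
    1 / (k : ℝ) ≤ fpa ((a : ℝ) / k) := by
  have hk0 : (0:ℝ) < k := by exact_mod_cast hk
  unfold fpa
  set r := round ((a:ℝ)/k)
  have hne : a - r * k ≠ 0 := by
    intro h
    have : Even a := by
      have : a = r * k := by omega
      rw [this]; exact (Int.even_coe_nat k |>.mpr hke).mul_left r
    exact (Int.not_odd_iff_even.mpr this) ha
  have h1 : (1:ℝ) ≤ |((a - r*k : ℤ) : ℝ)| := by
    rw [← Int.cast_abs]; exact_mod_cast Int.one_le_abs hne
  have : (a:ℝ)/k - r = ((a - r*k : ℤ):ℝ) / k := by push_cast; field_simp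
  rw [this, abs_div, abs_of_pos hk0, div_le_div_iff₀ hk0 hk0]
  nlinarith

set_option maxHeartbeats 1000000 in
theorem stmt_1 (α : ℝ) (ε : ℕ → ℝ) (hε : Tendsto ε atTop (nhds 0))
    (N : ℕ → ℕ) (hmono : StrictMono N) (hpos : ∀ i, 0 < N i) (hodd : ∀ i, Odd (N i))
    (k : ℕ) (hk : 0 < k) (hkeven : Even k)
    (m : ℕ → ℤ) (hmodd : ∀ i, Odd (m i))
    (γseq : ℕ → ℝ)
    (heq : ∀ i, (N i : ℝ) * α = (m i : ℝ) / (k : ℝ) + γseq i / ((k : ℝ) * (N i : ℝ)))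
    (γ : ℝ) (hγ : |γ| < 1)
    (hacc : ∃ φ : ℕ → ℕ, StrictMono φ ∧ Tendsto (γseq ∘ φ) atTop (nhds γ))
    (hirr : ¬ ∃ (n : ℕ) (z : ℤ), γ + (k : ℝ) * (n : ℝ) ^ 2 * α = (z : ℝ)) :
    {i : ℕ | ¬ ∃ n₁ ∈ A ε α, ∃ n₂ ∈ A ε α, n₁ + n₂ = N i}.Infinite := by
  by_contra hfin
  rw [Set.not_infinite] at hfin
  push_neg at hirr
  obtain ⟨φ, hφ, hγconv⟩ := hacc
  have hk0 : (0:ℝ) < k := by exact_mod_cast hk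
  have hkne : (k:ℝ) ≠ 0 := ne_of_gt hk0
  set c : ℝ := (1 + |γ|)/2 with hc
  have hcγ : |γ| < c := by rw [hc]; linarith
  have hc1 : c < 1 := by rw [hc]; linarith
  have hc0 : 0 < c := by rw [hc]; positivity
  -- threshold B₁ for case 1
  have h1pos : (0:ℝ) < (1 - c)/(4*k) :=
    div_pos (by linarith) (mul_pos (by norm_num) hk0)
  obtain ⟨B₁, hB₁⟩ : ∃ B, ∀ n ≥ B, ε n < (1 - c)/(4*k) :=
    eventually_atTop.mp (hε.eventually_lt_const h1pos)
  -- δ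
  set F : Finset ℕ := Finset.range (B₁ + 1) with hF
  have hFne : F.Nonempty := ⟨0, by simp [hF]⟩
  set δ : ℝ := F.inf' hFne (fun n => fpa (γ + (k:ℝ) * (n:ℝ)^2 * α)) with hδdef
  have hδpos : 0 < δ := by
    rw [hδdef, Finset.lt_inf'_iff]
    intro n _
    exact fpa_pos (fun z => hirr n z)
  have hδle : ∀ n : ℕ, n ≤ B₁ → δ ≤ fpa (γ + (k:ℝ) * (n:ℝ)^2 * α) := by
    intro n hn
    exact Finset.inf'_le _ (by simp only [hF, Finset.mem_range]; omega)
  -- threshold B₂ for case 2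
  obtain ⟨B₂, hB₂⟩ : ∃ B, ∀ n ≥ B, ε n < δ/(4*k) :=
    eventually_atTop.mp (hε.eventually_lt_const
      (div_pos hδpos (mul_pos (by norm_num) hk0)))
  -- decompositions exist eventually
  obtain ⟨I, hI⟩ : ∃ I, ∀ i ≥ I, ∃ n₁ ∈ A ε α, ∃ n₂ ∈ A ε α, n₁ + n₂ = N i := by
    have := hfin.eventually_cofinite_notMem
    rw [Nat.cofinite_eq_atTop, eventually_atTop] at this
    obtain ⟨I, hI⟩ := this
    exact ⟨I, fun i hi => by have := hI i hi; simpa using this⟩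
  obtain ⟨J₁, hJ₁⟩ : ∃ J, ∀ j ≥ J, |γseq (φ j)| < c :=
    eventually_atTop.mp ((hγconv.abs).eventually_lt_const hcγ)
  obtain ⟨J₂, hJ₂⟩ : ∃ J, ∀ j ≥ J, |γseq (φ j) - γ| < δ/4 := by
    obtain ⟨J, hJ⟩ := Metric.tendsto_atTop.mp hγconv (δ/4) (by positivity)
    exact ⟨J, fun j hj => by have := hJ j hj; rwa [Real.dist_eq] at this⟩
  obtain ⟨M₃, hM₃⟩ : ∃ M : ℕ, (8 * B₁ : ℝ) / δ < M := exists_nat_gt _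
  -- pick j
  set j := max (max I J₁) (max J₂ (max (2*B₁ + 1) (max (B₂ + B₁) M₃))) with hj
  set i := φ j with hi
  have hji : j ≤ i := hφ.le_apply
  have hjN : j ≤ N i := le_trans hji hmono.le_apply
  set Ni := N i with hNi
  set mi := m i with hmi
  set gi := γseq i with hgi
  have hNi0 : (0:ℝ) < Ni := by exact_mod_cast hpos i
  have hNne : (Ni:ℝ) ≠ 0 := ne_of_gt hNi0
  have hNiodd : Odd Ni := hodd i
  have hgic : |gi| < c := hJ₁ j (le_trans (le_max_right _ _) (le_max_left _ _))
  have hgiγ : |gi - γ| < δ/4 :=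
    hJ₂ j (le_trans (le_max_left _ _) (le_max_right _ _))
  have hNi2B : 2*B₁ + 1 ≤ Ni :=
    le_trans (le_trans (le_trans (le_max_left _ _) (le_max_right _ _)) (le_max_right _ _)) hjN
  have hNiB₂ : B₂ + B₁ ≤ Ni :=
    le_trans (le_trans (le_trans (le_trans (le_max_left _ _) (le_max_right _ _))
      (le_max_right _ _)) (le_max_right _ _)) hjN
  have hNiδ : (8 * B₁ : ℝ)/δ < Ni := by
    refine lt_of_lt_of_le hM₃ ?_
    exact_mod_cast le_trans (le_trans (le_trans (le_trans (le_max_right _ _)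
      (le_max_right _ _)) (le_max_right _ _)) (le_max_right _ _)) hjN
  obtain ⟨n₁, hn₁, n₂, hn₂, hsum⟩ :=
    hI i (le_trans (le_trans (le_max_left _ _) (le_max_left _ _)) hji)
  -- key: gi = k Ni² α − Ni mi
  have hg : gi = (k:ℝ) * (Ni:ℝ)^2 * α - (Ni:ℝ) * mi := by
    have h := heq i
    have h' : (Ni:ℝ) * α * ((k:ℝ) * Ni) = (mi:ℝ) * Ni + gi := by
      rw [h, ← hNi, ← hmi, ← hgi]; field_simp
    linear_combination -h'
  -- Case 2 helper
  have case2 : ∀ p q : ℕ, p ∈ A ε α → q ∈ A ε α → p + q = Ni → p < B₁ → False := by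
    intro p q hp hq hpq hpB
    have hqB₂ : B₂ ≤ q := by omega
    have hqcast : (q:ℝ) = Ni - p := by
      have : (p:ℝ) + q = Ni := by exact_mod_cast hpq
      linarith
    set z : ℤ := ((Ni:ℤ) - 2*p) * mi with hz
    have hident : (k:ℝ) * (α * (q:ℝ)^2)
        = (z:ℝ) + (gi * (1 - 2*p/Ni) + (k:ℝ) * ((p:ℝ)^2) * α) := by
      rw [hqcast, hz, hg]
      push_cast
      field_simp
      ring
    have hstep : fpa (γ + (k:ℝ) * (p:ℝ)^2 * α)
        ≤ fpa ((k:ℝ) * (α * (q:ℝ)^2)) + |γ - gi * (1 - 2*p/Ni)| := by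
      have e1 : γ + (k:ℝ) * (p:ℝ)^2 * α
          = ((k:ℝ) * (α * (q:ℝ)^2) - (z:ℝ)) + (γ - gi * (1 - 2*p/Ni)) := by
        rw [hident]; ring
      rw [e1]
      refine le_trans (fpa_le_fpa_add_abs _ _) ?_
      rw [fpa_sub_int]
    have h2 : fpa ((k:ℝ) * (α * (q:ℝ)^2)) ≤ k * ε q := by
      refine le_trans (fpa_nat_mul k _) ?_
      have hq' : fpa (α * (q:ℝ)^2) ≤ ε q := hq
      exact mul_le_mul_of_nonneg_left hq' hk0.le
    have h3 : (k:ℝ) * ε q < δ/4 := by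
      have h := hB₂ q hqB₂
      calc (k:ℝ) * ε q < k * (δ/(4*k)) := mul_lt_mul_of_pos_left h hk0
        _ = δ/4 := by field_simp
    have h4 : |γ - gi * (1 - 2*p/Ni)| < δ/2 := by
      have e2 : γ - gi * (1 - 2*p/Ni) = (γ - gi) + gi * (2*p/Ni) := by ring
      have hb1 : |γ - gi| < δ/4 := by rw [abs_sub_comm]; exact hgiγ
      have hb2 : |gi * (2*p/Ni)| < δ/4 := by
        rw [abs_mul]
        have hfrac : |2*(p:ℝ)/Ni| ≤ 2*B₁/Ni := by
          rw [abs_of_nonneg (by positivity)]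
          have hpB' : (p:ℝ) ≤ B₁ := by exact_mod_cast hpB.le
          gcongr
        have hB1N : 2*(B₁:ℝ)/Ni < δ/4 := by
          rw [div_lt_div_iff₀ hNi0 (by norm_num : (0:ℝ) < 4)]
          have := (div_lt_iff₀ hδpos).mp hNiδ
          nlinarith
        calc |gi| * |2*(p:ℝ)/Ni| ≤ 1 * (2*B₁/Ni) :=
              mul_le_mul (le_of_lt (lt_of_lt_of_le hgic hc1.le)) hfrac (abs_nonneg _) zero_le_one
          _ = 2*(B₁:ℝ)/Ni := by ring
          _ < δ/4 := hB1N
      calc |γ - gi * (1 - 2*p/Ni)| ≤ |γ - gi| + |gi * (2*p/Ni)| := by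
            rw [e2]; exact abs_add_le _ _
        _ < δ/4 + δ/4 := add_lt_add hb1 hb2
        _ = δ/2 := by ring
    have hge : δ ≤ fpa (γ + (k:ℝ) * (p:ℝ)^2 * α) := hδle p hpB.le
    linarith [lt_of_le_of_lt hstep (add_lt_add_of_le_of_lt (h2.trans h3.le) h4)]
  by_cases hcase : B₁ ≤ n₁ ∧ B₁ ≤ n₂
  · -- Case 1
    obtain ⟨hn₁B, hn₂B⟩ := hcase
    set d : ℤ := (n₁:ℤ) - n₂ with hd
    have hsZ : (n₁:ℤ) + n₂ = Ni := by exact_mod_cast hsum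
    have hdodd : Odd d := by
      have h1 : Odd ((Ni:ℕ) : ℤ) := by exact_mod_cast hNiodd
      rw [Int.odd_iff] at h1 ⊢
      omega
    have haodd : Odd (d * mi) := hdodd.mul (hmodd i)
    have hsumR : (n₁:ℝ) + n₂ = Ni := by exact_mod_cast hsum
    have hident : α * (n₁:ℝ)^2 - α * (n₂:ℝ)^2
        = ((d * mi : ℤ):ℝ)/k + (d:ℝ)*gi/((k:ℝ)*Ni) := by
      have e : ((d*mi : ℤ):ℝ) = ((n₁:ℝ) - n₂) * mi := by rw [hd]; push_cast; ring
      have hdR : (d:ℝ) = (n₁:ℝ) - n₂ := by rw [hd]; push_cast; ring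
      rw [e, hdR, hg]
      field_simp
      linear_combination (α * (k:ℝ) * ((n₁:ℝ) - n₂)) * hsumR
    have hlow : 1/(k:ℝ) ≤ fpa (((d*mi : ℤ):ℝ)/k) := fpa_odd_div haodd hk hkeven
    have hup : fpa (((d*mi : ℤ):ℝ)/k)
        ≤ fpa (α * (n₁:ℝ)^2 - α * (n₂:ℝ)^2) + |(d:ℝ)*gi/((k:ℝ)*Ni)| := by
      have e : ((d*mi : ℤ):ℝ)/k
          = (α * (n₁:ℝ)^2 - α * (n₂:ℝ)^2) + (-((d:ℝ)*gi/((k:ℝ)*Ni))) := by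
        rw [hident]; ring
      rw [e]
      exact le_trans (fpa_le_fpa_add_abs _ _) (by rw [abs_neg])
    have hfd : fpa (α * (n₁:ℝ)^2 - α * (n₂:ℝ)^2) ≤ ε n₁ + ε n₂ :=
      le_trans (fpa_sub_le _ _) (add_le_add hn₁ hn₂)
    have hee : ε n₁ + ε n₂ < (1-c)/(2*k) := by
      have h1 := hB₁ n₁ hn₁B
      have h2 := hB₁ n₂ hn₂B
      have h3 : (1-c)/(4*k) + (1-c)/(4*k) = (1-c)/(2*k) := by field_simp; ring
      linarith
    have habs : |(d:ℝ)*gi/((k:ℝ)*Ni)| ≤ c/k := by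
      have hdZ : |d| ≤ (Ni:ℤ) := by rw [abs_le]; omega
      have hdle : |(d:ℝ)| ≤ Ni := by
        rw [← Int.cast_abs]; exact_mod_cast hdZ
      rw [abs_div, abs_mul, abs_mul, abs_of_pos hk0, abs_of_pos hNi0,
        div_le_div_iff₀ (mul_pos hk0 hNi0) hk0]
      have : |(d:ℝ)| * |gi| ≤ (Ni:ℝ) * c :=
        mul_le_mul hdle hgic.le (abs_nonneg _) hNi0.le
      nlinarith
    have hfin2 : 1/(k:ℝ) ≤ (1-c)/(2*k) + c/k := by
      calc 1/(k:ℝ) ≤ fpa (((d*mi : ℤ):ℝ)/k) := hlow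
        _ ≤ fpa (α * (n₁:ℝ)^2 - α * (n₂:ℝ)^2) + |(d:ℝ)*gi/((k:ℝ)*Ni)| := hup
        _ ≤ (ε n₁ + ε n₂) + c/k := add_le_add hfd habs
        _ ≤ (1-c)/(2*k) + c/k := by linarith
    have h4 : (1:ℝ) ≤ (1-c)/2 + c := by
      have h5 : (1-c)/(2*k)*k = (1-c)/2 := by field_simp
      have h6 : c/(k:ℝ)*k = c := by field_simp
      have h7 : 1/(k:ℝ)*k = 1 := by field_simp
      have := mul_le_mul_of_nonneg_right hfin2 hk0.le
      rw [add_mul, h5, h6, h7] at this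
      exact this
    linarith
  · -- Case 2
    push_neg at hcase
    by_cases h1 : B₁ ≤ n₁
    · exact case2 n₂ n₁ hn₂ hn₁ (by omega) (by omega)
    · exact case2 n₁ n₂ hn₁ hn₂ hsum (by omega)
end

section
/- Let ε₁ = (1/4)·(1 − 1/(4√2)). Suppose ε : ℕ → ℝ satisfies ε(n) ≤ ε₀ for all n, where 0 < ε₀ < ε₁. Then the set A(ε,√2) is not a basis of order 2; moreover there exists a constant K > 0 (depending only on ε₀) such that |{1,…,T} \ (A(ε,√2) + A(ε,√2))| ≥ K·log T for all sufficiently large T. -/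
open Filter
open scoped Pointwise

namespace Stmt2Aux

/-- Pairs `(x, N)` with `x ^ 2 = 8 N ^ 2 + 1` and `N` odd. -/
def P2 : ℕ → ℕ × ℕ
  | 0 => (3, 1)
  | k + 1 => ((P2 k).1 * 17 + (P2 k).2 * 48, (P2 k).1 * 6 + (P2 k).2 * 17)

lemma P2_basic (k : ℕ) :
    3 ≤ (P2 k).1 ∧ k + 1 ≤ (P2 k).2 ∧ (P2 k).1 % 2 = 1 ∧ (P2 k).2 % 2 = 1 := by
  induction k with
  | zero => simp [P2]
  | succ k ih => simp only [P2]; omega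

lemma P2_pell (k : ℕ) : ((P2 k).1 : ℤ) ^ 2 = 8 * ((P2 k).2 : ℤ) ^ 2 + 1 := by
  induction k with
  | zero => simp [P2]
  | succ k ih =>
    simp only [P2]
    push_cast
    push_cast at ih
    linear_combination ih

lemma P2_le (k : ℕ) : (P2 k).2 ≤ 35 ^ k := by
  induction k with
  | zero => simp [P2]
  | succ k ih =>
    have hb := (P2_basic k).2.1
    have ha3 : (P2 k).1 ≤ 3 * (P2 k).2 := by
      by_contra h
      push_neg at h
      have h' : 3 * ((P2 k).2 : ℤ) + 1 ≤ ((P2 k).1 : ℤ) := by exact_mod_cast h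
      have hb' : (1 : ℤ) ≤ ((P2 k).2 : ℤ) := by exact_mod_cast (show 1 ≤ (P2 k).2 by omega)
      nlinarith [P2_pell k]
    have h1 : (P2 (k + 1)).2 ≤ 35 * (P2 k).2 := by
      simp only [P2]; omega
    calc (P2 (k + 1)).2 ≤ 35 * (P2 k).2 := h1
      _ ≤ 35 * 35 ^ k := Nat.mul_le_mul_left _ ih
      _ = 35 ^ (k + 1) := (pow_succ' 35 k).symm

set_option maxHeartbeats 1000000 in
lemma key_abstract (ε : ℕ → ℝ) (ε₀ : ℝ)
    (hε₁ : ε₀ < (1 / 4) * (1 - 1 / (4 * Real.sqrt 2)))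
    (hε : ∀ n, ε n ≤ ε₀) (x N a b : ℕ)
    (hp' : (x : ℤ) ^ 2 = 8 * (N : ℤ) ^ 2 + 1)
    (hxodd : x % 2 = 1) (hNodd : N % 2 = 1) (hN1 : 1 ≤ N)
    (hab : a + b = N)
    (ha : a ∈ A ε (Real.sqrt 2)) (hb : b ∈ A ε (Real.sqrt 2)) : False := by
  set s := Real.sqrt 2 with hs
  have hs0 : (0 : ℝ) < s := Real.sqrt_pos.mpr (by norm_num)
  have hs2 : s ^ 2 = 2 := Real.sq_sqrt (by norm_num)
  have hE : 16 * s * ε₀ < 4 * s - 1 := by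
    have h16 : (0 : ℝ) < 16 * s := by positivity
    have h := mul_lt_mul_of_pos_left hε₁ h16
    have h4 : (4 * s) ≠ 0 := by positivity
    calc 16 * s * ε₀ < 16 * s * ((1 / 4) * (1 - 1 / (4 * s))) := h
      _ = 4 * s - 1 := by field_simp; ring
  simp only [A, Set.mem_setOf_eq, fpa] at ha hb
  have haR : |s * (a : ℝ) ^ 2 - round (s * (a : ℝ) ^ 2)| ≤ ε₀ := ha.trans (hε a)
  have hbR : |s * (b : ℝ) ^ 2 - round (s * (b : ℝ) ^ 2)| ≤ ε₀ := hb.trans (hε b)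
  set A0 : ℤ := round (s * (a : ℝ) ^ 2) with hA0
  set B0 : ℤ := round (s * (b : ℝ) ^ 2) with hB0
  set m : ℤ := (N : ℤ) - 2 * a with hm
  have hmodd : Odd m := by
    rw [Int.odd_iff]
    omega
  have hxoddZ : Odd ((x : ℤ)) := by
    rw [Int.odd_iff]
    omega
  obtain ⟨j, hj⟩ := hxoddZ.mul hmodd
  -- hj : x * m = 2 * j + 1
  set d : ℝ := (x : ℝ) - 2 * s * N with hd
  have hp : ((x : ℝ)) ^ 2 = 8 * (N : ℝ) ^ 2 + 1 := by exact_mod_cast hp'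
  have hd1 : d * ((x : ℝ) + 2 * s * N) = 1 := by
    rw [hd]; linear_combination hp - (4 * (N : ℝ) ^ 2) * hs2
  have hN1R : (1 : ℝ) ≤ (N : ℝ) := by exact_mod_cast hN1
  have hpos : (0 : ℝ) < (x : ℝ) + 2 * s * N := by
    have : (0 : ℝ) ≤ (x : ℝ) := Nat.cast_nonneg x
    nlinarith
  have hd' : d = 1 / ((x : ℝ) + 2 * s * N) := eq_one_div_of_mul_eq_one_left hd1
  have hd0 : 0 < d := by rw [hd']; positivity
  have hdN : d * (N : ℝ) * (4 * s) = 1 - d ^ 2 := by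
    linear_combination hd1 + d * hd
  have hdN1 : d * (N : ℝ) * (4 * s) ≤ 1 := by nlinarith [sq_nonneg d]
  have hmN : -(N : ℤ) ≤ m ∧ m ≤ (N : ℤ) := by
    have habZ : (a : ℤ) + b = N := by exact_mod_cast hab
    omega
  have hmR : |(m : ℝ)| ≤ (N : ℝ) := by
    rw [abs_le]
    constructor <;> [exact_mod_cast hmN.1; exact_mod_cast hmN.2]
  have hdm : |d * (m : ℝ)| * (4 * s) ≤ 1 := by
    have h1 : |d * (m : ℝ)| ≤ d * (N : ℝ) := by
      rw [abs_mul, abs_of_pos hd0]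
      exact mul_le_mul_of_nonneg_left hmR hd0.le
    calc |d * (m : ℝ)| * (4 * s) ≤ (d * (N : ℝ)) * (4 * s) :=
          mul_le_mul_of_nonneg_right h1 (by positivity)
      _ ≤ 1 := hdN1
  have hbRe : (b : ℝ) = (N : ℝ) - a := by
    have : (a : ℝ) + b = N := by exact_mod_cast hab
    linarith
  have hmRe : (m : ℝ) = (N : ℝ) - 2 * a := by rw [hm]; push_cast; ring
  have hjR : (x : ℝ) * (m : ℝ) = 2 * (j : ℝ) + 1 := by exact_mod_cast hj
  have hid : s * (b : ℝ) ^ 2 - s * (a : ℝ) ^ 2 = (j : ℝ) + 1 / 2 - d * (m : ℝ) / 2 := by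
    have e1 : s * (b : ℝ) ^ 2 - s * (a : ℝ) ^ 2 = s * (N : ℝ) * (m : ℝ) := by
      rw [hbRe, hmRe]; ring
    have e2 : s * (N : ℝ) * (m : ℝ) = ((x : ℝ) * (m : ℝ)) / 2 - d * (m : ℝ) / 2 := by
      rw [hd]; ring
    rw [e1, e2, hjR]; ring
  have hab2 : |((B0 : ℝ) - A0) - (s * (b : ℝ) ^ 2 - s * (a : ℝ) ^ 2)| ≤ 2 * ε₀ := by
    have hre : ((B0 : ℝ) - A0) - (s * (b : ℝ) ^ 2 - s * (a : ℝ) ^ 2)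
        = (-(s * (b : ℝ) ^ 2 - B0)) + (s * (a : ℝ) ^ 2 - A0) := by ring
    rw [hre]
    calc |(-(s * (b : ℝ) ^ 2 - B0)) + (s * (a : ℝ) ^ 2 - A0)|
        ≤ |(-(s * (b : ℝ) ^ 2 - B0))| + |s * (a : ℝ) ^ 2 - A0| := abs_add_le _ _
      _ = |s * (b : ℝ) ^ 2 - B0| + |s * (a : ℝ) ^ 2 - A0| := by rw [abs_neg]
      _ ≤ ε₀ + ε₀ := add_le_add hbR haR
      _ = 2 * ε₀ := by ring
  set D : ℤ := B0 - A0 - j with hD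
  have hfin : |(D : ℝ) - 1 / 2 + d * (m : ℝ) / 2| ≤ 2 * ε₀ := by
    have hre : (D : ℝ) - 1 / 2 + d * (m : ℝ) / 2
        = ((B0 : ℝ) - A0) - (s * (b : ℝ) ^ 2 - s * (a : ℝ) ^ 2) := by
      rw [hid, hD]; push_cast; ring
    rw [hre]; exact hab2
  clear_value A0 B0 m d D
  obtain ⟨hl, hu⟩ := abs_le.mp hfin
  have hdm_u : d * (m : ℝ) * (4 * s) ≤ 1 := by
    have := mul_le_mul_of_nonneg_right (le_abs_self (d * (m : ℝ)))
      (show (0 : ℝ) ≤ 4 * s by positivity)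
    linarith
  have hdm_l : -1 ≤ d * (m : ℝ) * (4 * s) := by
    have := mul_le_mul_of_nonneg_right (neg_abs_le (d * (m : ℝ)))
      (show (0 : ℝ) ≤ 4 * s by positivity)
    linarith
  rcases le_or_gt D 0 with hD0 | hD1
  · have hDr : (D : ℝ) ≤ 0 := by exact_mod_cast hD0
    have h1 : 1 / 2 - 2 * ε₀ ≤ d * (m : ℝ) / 2 := by linarith
    have h2 : (1 / 2 - 2 * ε₀) * (8 * s) ≤ (d * (m : ℝ) / 2) * (8 * s) :=
      mul_le_mul_of_nonneg_right h1 (by positivity)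
    have h3 : (d * (m : ℝ) / 2) * (8 * s) = d * (m : ℝ) * (4 * s) := by ring
    have h4 : (1 / 2 - 2 * ε₀) * (8 * s) = 4 * s - 16 * s * ε₀ := by ring
    linarith
  · have hDr : (1 : ℝ) ≤ (D : ℝ) := by exact_mod_cast hD1
    have h1 : d * (m : ℝ) / 2 ≤ 2 * ε₀ - 1 / 2 := by linarith
    have h2 : (d * (m : ℝ) / 2) * (8 * s) ≤ (2 * ε₀ - 1 / 2) * (8 * s) :=
      mul_le_mul_of_nonneg_right h1 (by positivity)
    have h3 : (d * (m : ℝ) / 2) * (8 * s) = d * (m : ℝ) * (4 * s) := by ring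
    have h4 : (2 * ε₀ - 1 / 2) * (8 * s) = 16 * s * ε₀ - 4 * s := by ring
    linarith

lemma not_mem_sumset (ε : ℕ → ℝ) (ε₀ : ℝ)
    (hε₁ : ε₀ < (1 / 4) * (1 - 1 / (4 * Real.sqrt 2)))
    (hε : ∀ n, ε n ≤ ε₀) (k : ℕ) :
    (P2 k).2 ∉ A ε (Real.sqrt 2) + A ε (Real.sqrt 2) := by
  intro hmem
  rw [Set.mem_add] at hmem
  obtain ⟨a, ha, b, hb, hab⟩ := hmem
  obtain ⟨hx3, hN1, hxodd, hNodd⟩ := P2_basic k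
  exact key_abstract ε ε₀ hε₁ hε (P2 k).1 (P2 k).2 a b (P2_pell k)
    hxodd hNodd (by omega) hab ha hb

end Stmt2Aux

theorem stmt_2 (ε : ℕ → ℝ) (ε₀ : ℝ) (hε₀ : 0 < ε₀)
    (hε₁ : ε₀ < (1 / 4) * (1 - 1 / (4 * Real.sqrt 2)))
    (hε : ∀ n, ε n ≤ ε₀) :
    (¬ ∀ᶠ N : ℕ in atTop, N ∈ A ε (Real.sqrt 2) + A ε (Real.sqrt 2)) ∧
    ∃ K > (0 : ℝ), ∀ᶠ T : ℕ in atTop,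
      K * Real.log T ≤
        ((Set.Icc 1 T \ (A ε (Real.sqrt 2) + A ε (Real.sqrt 2))).ncard : ℝ) := by
  have key := fun k => Stmt2Aux.not_mem_sumset ε ε₀ hε₁ hε k
  have hlog35 : 0 < Real.log 35 := Real.log_pos (by norm_num)
  constructor
  · intro h
    rw [eventually_atTop] at h
    obtain ⟨n₀, hn₀⟩ := h
    exact key n₀ (hn₀ _ (by have := (Stmt2Aux.P2_basic n₀).2.1; omega))
  · refine ⟨1 / Real.log 35, by positivity, ?_⟩
    rw [eventually_atTop]
    refine ⟨1, fun T hT => ?_⟩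
    set L := Nat.log 35 T with hL
    have hmono : StrictMono (fun k => (Stmt2Aux.P2 k).2) := by
      apply strictMono_nat_of_lt_succ
      intro k
      have h1 := (Stmt2Aux.P2_basic k).1
      simp only [Stmt2Aux.P2]
      omega
    set F : Finset ℕ := (Finset.range (L + 1)).image (fun k => (Stmt2Aux.P2 k).2) with hF
    have hcard : F.card = L + 1 := by
      rw [hF, Finset.card_image_of_injective _ hmono.injective, Finset.card_range]
    have hsub : (F : Set ℕ) ⊆
        Set.Icc 1 T \ (A ε (Real.sqrt 2) + A ε (Real.sqrt 2)) := by
      intro n hn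
      simp only [hF, Finset.coe_image, Finset.coe_range, Set.mem_image,
        Set.mem_Iio] at hn
      obtain ⟨k, hk, rfl⟩ := hn
      refine ⟨⟨?_, ?_⟩, key k⟩
      · have := (Stmt2Aux.P2_basic k).2.1; omega
      · calc (Stmt2Aux.P2 k).2 ≤ 35 ^ k := Stmt2Aux.P2_le k
          _ ≤ 35 ^ L := Nat.pow_le_pow_right (by norm_num) (by omega)
          _ ≤ T := Nat.pow_log_le_self 35 (by omega)
    have hfinite : (Set.Icc 1 T \ (A ε (Real.sqrt 2) + A ε (Real.sqrt 2))).Finite :=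
      (Set.finite_Icc 1 T).diff
    have hnc : (L + 1 : ℝ) ≤
        ((Set.Icc 1 T \ (A ε (Real.sqrt 2) + A ε (Real.sqrt 2))).ncard : ℝ) := by
      have h1 := Set.ncard_le_ncard hsub hfinite
      rw [Set.ncard_coe_finset, hcard] at h1
      exact_mod_cast h1
    have hT1 : (1 : ℝ) ≤ (T : ℝ) := by exact_mod_cast hT
    have hlog : Real.log T < (L + 1) * Real.log 35 := by
      have h2 : (T : ℝ) < (35 : ℝ) ^ (L + 1) := by
        exact_mod_cast Nat.lt_pow_succ_log_self (by norm_num : 1 < 35) T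
      calc Real.log T < Real.log ((35 : ℝ) ^ (L + 1)) :=
            Real.log_lt_log (by linarith) h2
        _ = (L + 1) * Real.log 35 := by rw [Real.log_pow]; push_cast; ring
    have hdiv : Real.log T / Real.log 35 ≤ (L + 1 : ℝ) := by
      rw [div_le_iff₀ hlog35]
      push_cast
      linarith
    calc 1 / Real.log 35 * Real.log T = Real.log T / Real.log 35 := by ring
      _ ≤ (L + 1 : ℝ) := hdiv
      _ ≤ _ := hnc
end

section
/- Suppose ε : ℕ → ℝ satisfies ε(n) → 0 as n → ∞. Then the set A(ε,√2) is not a basis of order 2; that is, infinitely many natural numbers are not sums of two elements of A(ε,√2). -/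
open Filter
open scoped Pointwise

namespace Stmt3Aux

lemma fpa_le_int (t : ℝ) (m : ℤ) : fpa t ≤ |t - m| := by
  rcases le_or_gt (1/2) |t - (m:ℝ)| with h | h
  · exact le_trans (abs_sub_round t) h
  · have h2 := abs_lt.mp h
    have hm : round t = m := by
      rw [round_eq]
      refine Int.floor_eq_iff.mpr ⟨?_, ?_⟩
      · push_cast; linarith [h2.1]
      · push_cast; linarith [h2.2]
    unfold fpa
    rw [hm]

lemma s_sq : Real.sqrt 2 ^ 2 = 2 := Real.sq_sqrt (by norm_num)

lemma s_gt : 1.4 < Real.sqrt 2 := by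
  nlinarith [s_sq, Real.sqrt_nonneg 2]

lemma s_lt : Real.sqrt 2 < 1.5 := by
  nlinarith [s_sq, Real.sqrt_nonneg 2]

/-- Pell pairs `(x, N)` with `x² − 8 N² = 1`, `x, N` odd. -/
def pell : ℕ → ℕ × ℕ
  | 0 => (3, 1)
  | k+1 => (17 * (pell k).1 + 48 * (pell k).2, 6 * (pell k).1 + 17 * (pell k).2)

lemma pell_sq (k : ℕ) : ((pell k).1 : ℤ)^2 = 8 * ((pell k).2 : ℤ)^2 + 1 := by
  induction k with
  | zero => norm_num [pell]
  | succ k ih =>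
      show ((17 * (pell k).1 + 48 * (pell k).2 : ℕ) : ℤ)^2
        = 8 * ((6 * (pell k).1 + 17 * (pell k).2 : ℕ) : ℤ)^2 + 1
      push_cast
      linear_combination ih

lemma pell_odd (k : ℕ) : (pell k).1 % 2 = 1 ∧ (pell k).2 % 2 = 1 := by
  induction k with
  | zero => decide
  | succ k ih =>
      show (17 * (pell k).1 + 48 * (pell k).2) % 2 = 1 ∧
        (6 * (pell k).1 + 17 * (pell k).2) % 2 = 1
      omega

lemma pell_pos (k : ℕ) : 1 ≤ (pell k).1 ∧ 1 ≤ (pell k).2 := by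
  induction k with
  | zero => decide
  | succ k ih =>
      show 1 ≤ 17 * (pell k).1 + 48 * (pell k).2 ∧ 1 ≤ 6 * (pell k).1 + 17 * (pell k).2
      omega

lemma pell_lt (k : ℕ) : (pell k).2 < (pell (k+1)).2 := by
  have h := pell_pos k
  show (pell k).2 < 6 * (pell k).1 + 17 * (pell k).2
  omega

lemma pell_ge (k : ℕ) : k + 1 ≤ (pell k).2 := by
  induction k with
  | zero => decide
  | succ k ih => have := pell_lt k; omega

/-- Key identity: for `a + b = N`, with `δ_n = √2 n² - round (√2 n²)`,
    `δ_b - δ_a + J = 1/2 + (2√2 N - x)(N - 2a)/2` for some integer `J`. -/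
lemma core (x N a b : ℕ) (hx2 : (x:ℤ)^2 = 8*(N:ℤ)^2+1) (hxo : x % 2 = 1)
    (hNo : N % 2 = 1) (hab : a + b = N) :
    ∃ J : ℤ, (Real.sqrt 2 * (b:ℝ)^2 - round (Real.sqrt 2 * (b:ℝ)^2))
      - (Real.sqrt 2 * (a:ℝ)^2 - round (Real.sqrt 2 * (a:ℝ)^2)) + J
      = 1/2 + (2*Real.sqrt 2*(N:ℝ) - (x:ℝ)) * ((N:ℝ) - 2*(a:ℝ))/2 := by
  have hodd : Odd ((x:ℤ) * ((N:ℤ) - 2*(a:ℤ))) := by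
    refine Odd.mul ?_ ?_
    · rw [Int.odd_iff]; omega
    · rw [Int.odd_iff]; omega
  obtain ⟨S, hS⟩ := hodd
  have hS' : (x:ℝ) * ((N:ℝ) - 2*(a:ℝ)) = 2*(S:ℝ)+1 := by exact_mod_cast hS
  have hbr : (b:ℝ) = (N:ℝ) - (a:ℝ) := by
    have : (a:ℝ) + (b:ℝ) = (N:ℝ) := by exact_mod_cast hab
    linarith
  refine ⟨round (Real.sqrt 2 * (b:ℝ)^2) - round (Real.sqrt 2 * (a:ℝ)^2) - S, ?_⟩
  have key : Real.sqrt 2 * (b:ℝ)^2 - Real.sqrt 2*(a:ℝ)^2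
      = (S:ℝ) + 1/2 + (2*Real.sqrt 2*(N:ℝ) - (x:ℝ)) * ((N:ℝ)-2*(a:ℝ))/2 := by
    rw [hbr]
    linear_combination (1/2) * hS'
  push_cast
  linear_combination key

/-- Facts about `t = x − 2√2 N`. -/
lemma theta (x N : ℕ) (hx2 : (x:ℝ)^2 = 8*(N:ℝ)^2+1) (hN : 1 ≤ N) :
    2*Real.sqrt 2*(N:ℝ) < (x:ℝ) ∧
    ((x:ℝ) - 2*Real.sqrt 2*(N:ℝ)) * ((x:ℝ) + 2*Real.sqrt 2*(N:ℝ)) = 1 := by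
  have hs := s_sq
  have hN' : (1:ℝ) ≤ (N:ℝ) := by exact_mod_cast hN
  have h1 : (2*Real.sqrt 2*(N:ℝ))^2 < (x:ℝ)^2 := by nlinarith
  have h2 : 2*Real.sqrt 2*(N:ℝ) < (x:ℝ) :=
    lt_of_pow_lt_pow_left₀ 2 (by positivity) h1
  refine ⟨h2, ?_⟩
  linear_combination hx2 - 4*(N:ℝ)^2*hs

set_option maxHeartbeats 2000000 in
/-- Main inequality: for Pell `N` and any decomposition `a + b = N`,
    the two fractional-part distances sum to at least `2/5`. -/
lemma main_ineq (x N a b : ℕ) (hx2I : (x:ℤ)^2 = 8*(N:ℤ)^2+1) (hxo : x % 2 = 1)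
    (hNo : N % 2 = 1) (hN : 1 ≤ N) (hab : a + b = N) :
    2/5 ≤ fpa (Real.sqrt 2 * (a:ℝ)^2) + fpa (Real.sqrt 2 * (b:ℝ)^2) := by
  have hx2 : (x:ℝ)^2 = 8*(N:ℝ)^2+1 := by exact_mod_cast hx2I
  obtain ⟨J, hJ⟩ := core x N a b hx2I hxo hNo hab
  obtain ⟨hlt, hprod⟩ := theta x N hx2 hN
  have hs1 := s_gt
  have hs2 := s_lt
  have hNpos : (0:ℝ) < (N:ℝ) := by
    have h1 : (1:ℝ) ≤ (N:ℝ) := by exact_mod_cast hN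
    linarith
  have haN : (a:ℝ) ≤ (N:ℝ) := by
    have h1 : a ≤ N := by omega
    exact_mod_cast h1
  have haP : (0:ℝ) ≤ (a:ℝ) := Nat.cast_nonneg a
  obtain ⟨t, ht_def⟩ : ∃ t : ℝ, t = (x:ℝ) - 2*Real.sqrt 2*(N:ℝ) := ⟨_, rfl⟩
  have ht_pos : 0 < t := by rw [ht_def]; linarith
  have hprod' : t * ((x:ℝ) + 2*Real.sqrt 2*(N:ℝ)) = 1 := by rw [ht_def]; exact hprod
  have h56 : 5.6*(N:ℝ) ≤ (x:ℝ) + 2*Real.sqrt 2*(N:ℝ) := by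
    nlinarith [mul_pos (show (0:ℝ) < Real.sqrt 2 - 1.4 by linarith) hNpos]
  have htN : t * (N:ℝ) ≤ 1/5 := by
    nlinarith [mul_le_mul_of_nonneg_left h56 ht_pos.le]
  have hub : t * ((N:ℝ) - 2*(a:ℝ)) ≤ 1/5 :=
    le_trans (mul_le_mul_of_nonneg_left (by linarith : (N:ℝ) - 2*(a:ℝ) ≤ (N:ℝ)) ht_pos.le) htN
  have hlb : -(1/5) ≤ t * ((N:ℝ) - 2*(a:ℝ)) := by
    have h1 : t * (-(N:ℝ)) ≤ t * ((N:ℝ) - 2*(a:ℝ)) :=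
      mul_le_mul_of_nonneg_left (by linarith : -(N:ℝ) ≤ (N:ℝ) - 2*(a:ℝ)) ht_pos.le
    nlinarith [htN]
  have hWexpr : (2*Real.sqrt 2*(N:ℝ) - (x:ℝ)) * ((N:ℝ) - 2*(a:ℝ))/2
      = -(t * ((N:ℝ) - 2*(a:ℝ)))/2 := by
    rw [ht_def]; ring
  rw [hWexpr] at hJ
  simp only [fpa]
  have e1 : Real.sqrt 2 * (a:ℝ)^2 - (round (Real.sqrt 2 * (a:ℝ)^2) : ℤ)
      ≤ |Real.sqrt 2 * (a:ℝ)^2 - (round (Real.sqrt 2 * (a:ℝ)^2) : ℤ)| := le_abs_self _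
  have e2 : -|Real.sqrt 2 * (a:ℝ)^2 - (round (Real.sqrt 2 * (a:ℝ)^2) : ℤ)|
      ≤ Real.sqrt 2 * (a:ℝ)^2 - (round (Real.sqrt 2 * (a:ℝ)^2) : ℤ) := neg_abs_le _
  have e3 : Real.sqrt 2 * (b:ℝ)^2 - (round (Real.sqrt 2 * (b:ℝ)^2) : ℤ)
      ≤ |Real.sqrt 2 * (b:ℝ)^2 - (round (Real.sqrt 2 * (b:ℝ)^2) : ℤ)| := le_abs_self _
  have e4 : -|Real.sqrt 2 * (b:ℝ)^2 - (round (Real.sqrt 2 * (b:ℝ)^2) : ℤ)|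
      ≤ Real.sqrt 2 * (b:ℝ)^2 - (round (Real.sqrt 2 * (b:ℝ)^2) : ℤ) := neg_abs_le _
  rcases le_or_gt (J:ℝ) 0 with hc | hc
  · linarith [hJ, hub, hlb, e2, e3]
  · have hJ1 : (1:ℝ) ≤ (J:ℝ) := by
      have h0 : (0:ℤ) < J := by exact_mod_cast hc
      have h1 : (1:ℤ) ≤ J := h0
      exact_mod_cast h1
    linarith [hJ, hub, hlb, e1, e4]

set_option maxHeartbeats 2000000 in
/-- Small-`a` inequality: `fpa (√2 b²) ≥ fpa (√2 a² + 1/2 − √2/16) − (a+1)/N`. -/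
lemma small_ineq (x N a b : ℕ) (hx2I : (x:ℤ)^2 = 8*(N:ℤ)^2+1) (hxo : x % 2 = 1)
    (hNo : N % 2 = 1) (hN : 1 ≤ N) (hab : a + b = N) (h2a : 2*a ≤ N) :
    fpa (Real.sqrt 2*(a:ℝ)^2 + 1/2 - Real.sqrt 2/16) - ((a:ℝ)+1)/(N:ℝ)
      ≤ fpa (Real.sqrt 2 * (b:ℝ)^2) := by
  have hx2 : (x:ℝ)^2 = 8*(N:ℝ)^2+1 := by exact_mod_cast hx2I
  obtain ⟨J, hJ⟩ := core x N a b hx2I hxo hNo hab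
  obtain ⟨hlt, hprod⟩ := theta x N hx2 hN
  have hs := s_sq
  have hs1 := s_gt
  have hs2 := s_lt
  have hN' : (1:ℝ) ≤ (N:ℝ) := by exact_mod_cast hN
  have hNpos : (0:ℝ) < (N:ℝ) := by linarith
  have h2a' : 2*(a:ℝ) ≤ (N:ℝ) := by exact_mod_cast h2a
  have haP : (0:ℝ) ≤ (a:ℝ) := Nat.cast_nonneg a
  obtain ⟨t, ht_def⟩ : ∃ t : ℝ, t = (x:ℝ) - 2*Real.sqrt 2*(N:ℝ) := ⟨_, rfl⟩
  have ht_pos : 0 < t := by rw [ht_def]; linarith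
  have hprod' : t * ((x:ℝ) + 2*Real.sqrt 2*(N:ℝ)) = 1 := by rw [ht_def]; exact hprod
  have h4N : 4*(N:ℝ) ≤ (x:ℝ) + 2*Real.sqrt 2*(N:ℝ) := by
    nlinarith [mul_pos (show (0:ℝ) < Real.sqrt 2 - 1.4 by linarith) hNpos]
  have ht4 : t * (4*(N:ℝ)) ≤ 1 := by
    nlinarith [mul_le_mul_of_nonneg_left h4N ht_pos.le]
  have hX_eq : Real.sqrt 2/16 - t*((N:ℝ)-2*(a:ℝ))/2
      = Real.sqrt 2 * t^2/16 + t*(a:ℝ) := by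
    linear_combination (-(Real.sqrt 2/16)) * hprod' + (t*(N:ℝ)/4) * hs
      + (-(Real.sqrt 2*t/16)) * ht_def
  have hX_nonneg : 0 ≤ Real.sqrt 2/16 - t*((N:ℝ)-2*(a:ℝ))/2 := by
    rw [hX_eq]
    have h1 : 0 ≤ Real.sqrt 2 * t^2/16 := by positivity
    have h2 : 0 ≤ t*(a:ℝ) := mul_nonneg ht_pos.le haP
    linarith
  have hX_le : Real.sqrt 2/16 - t*((N:ℝ)-2*(a:ℝ))/2 ≤ ((a:ℝ)+1)/(N:ℝ) := by
    rw [hX_eq, le_div_iff₀ hNpos]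
    have hb1 : (t*(a:ℝ))*(N:ℝ) ≤ (a:ℝ) := by
      nlinarith [mul_nonneg haP (show (0:ℝ) ≤ 1 - t*(4*(N:ℝ)) by linarith),
        mul_nonneg (mul_nonneg ht_pos.le haP) hNpos.le]
    have k1 : t*t*(N:ℝ) ≤ t/4 := by
      nlinarith [mul_nonneg ht_pos.le (show (0:ℝ) ≤ 1 - t*(4*(N:ℝ)) by linarith)]
    have htm : t ≤ 1/4 := by
      nlinarith [mul_nonneg ht_pos.le (show (0:ℝ) ≤ (N:ℝ) - 1 by linarith)]
    have k2 : (0:ℝ) ≤ t*t*(N:ℝ) :=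
      mul_nonneg (mul_nonneg ht_pos.le ht_pos.le) hNpos.le
    have hb2 : (Real.sqrt 2*t^2/16)*(N:ℝ) ≤ 1 := by
      nlinarith [mul_nonneg (show (0:ℝ) ≤ 1.5 - Real.sqrt 2 by linarith) k2, k1, ht_pos.le]
    nlinarith [hb1, hb2]
  have h1 : fpa (Real.sqrt 2*(a:ℝ)^2 + 1/2 - Real.sqrt 2/16)
      ≤ |Real.sqrt 2*(a:ℝ)^2 + 1/2 - Real.sqrt 2/16
          - ((round (Real.sqrt 2*(a:ℝ)^2) + J : ℤ):ℝ)| :=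
    fpa_le_int _ _
  have hre : Real.sqrt 2*(a:ℝ)^2 + 1/2 - Real.sqrt 2/16
      - ((round (Real.sqrt 2*(a:ℝ)^2) + J : ℤ):ℝ)
      = (Real.sqrt 2 * (b:ℝ)^2 - round (Real.sqrt 2 * (b:ℝ)^2))
        - ((2*Real.sqrt 2*(N:ℝ) - (x:ℝ))*((N:ℝ)-2*(a:ℝ))/2 + Real.sqrt 2/16) := by
    push_cast
    linarith [hJ]
  have hE : |(2*Real.sqrt 2*(N:ℝ) - (x:ℝ))*((N:ℝ)-2*(a:ℝ))/2 + Real.sqrt 2/16|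
      ≤ ((a:ℝ)+1)/(N:ℝ) := by
    have he : (2*Real.sqrt 2*(N:ℝ) - (x:ℝ))*((N:ℝ)-2*(a:ℝ))/2 + Real.sqrt 2/16
        = Real.sqrt 2/16 - t*((N:ℝ)-2*(a:ℝ))/2 := by
      rw [ht_def]; ring
    rw [he, abs_of_nonneg hX_nonneg]
    exact hX_le
  have htri : |(Real.sqrt 2 * (b:ℝ)^2 - round (Real.sqrt 2 * (b:ℝ)^2))
        - ((2*Real.sqrt 2*(N:ℝ) - (x:ℝ))*((N:ℝ)-2*(a:ℝ))/2 + Real.sqrt 2/16)|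
      ≤ |Real.sqrt 2 * (b:ℝ)^2 - round (Real.sqrt 2 * (b:ℝ)^2)|
        + |(2*Real.sqrt 2*(N:ℝ) - (x:ℝ))*((N:ℝ)-2*(a:ℝ))/2 + Real.sqrt 2/16| :=
    abs_sub _ _
  rw [hre] at h1
  have hfb : |Real.sqrt 2 * (b:ℝ)^2 - (round (Real.sqrt 2 * (b:ℝ)^2) : ℤ)|
      = fpa (Real.sqrt 2 * (b:ℝ)^2) := rfl
  rw [hfb] at htri
  linarith [h1, htri, hE]

/-- positivity of the constants `c_a`. -/
lemma c_pos (a : ℕ) : 0 < fpa (Real.sqrt 2*(a:ℝ)^2 + 1/2 - Real.sqrt 2/16) := by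
  rw [fpa, abs_pos, sub_ne_zero]
  intro h0
  have hne : (16*(a:ℤ)^2 - 1 : ℤ) ≠ 0 := by
    rcases Nat.eq_zero_or_pos a with rfl | hp
    · norm_num
    · have h1 : (1:ℤ) ≤ (a:ℤ) := by exact_mod_cast hp
      nlinarith
  have hirr : Irrational (((16*(a:ℤ)^2 - 1 : ℤ):ℝ) * Real.sqrt 2) :=
    irrational_sqrt_two.intCast_mul hne
  exact hirr.ne_int (16 * round (Real.sqrt 2*(a:ℝ)^2 + 1/2 - Real.sqrt 2/16) - 8)
    (by push_cast; linear_combination (16:ℝ) * h0)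

end Stmt3Aux

theorem stmt_3 (ε : ℕ → ℝ) (hε : Tendsto ε atTop (nhds 0)) :
    {N : ℕ | N ∉ A ε (Real.sqrt 2) + A ε (Real.sqrt 2)}.Infinite := by
  classical
  obtain ⟨K₀, hK₀⟩ := eventually_atTop.mp
    (hε.eventually_lt_const (by norm_num : (0:ℝ) < 1/5))
  have hne : (Finset.range (K₀+1)).Nonempty :=
    Finset.nonempty_range_iff.mpr (Nat.succ_ne_zero _)
  set c : ℝ := (Finset.range (K₀+1)).inf' hne
    (fun a => fpa (Real.sqrt 2*(a:ℝ)^2 + 1/2 - Real.sqrt 2/16)) with hc_def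
  have hc_pos : 0 < c := (Finset.lt_inf'_iff hne).mpr (fun a _ => Stmt3Aux.c_pos a)
  have hc_le : ∀ a, a ≤ K₀ → c ≤ fpa (Real.sqrt 2*(a:ℝ)^2 + 1/2 - Real.sqrt 2/16) :=
    fun a ha => Finset.inf'_le _ (Finset.mem_range.mpr (by omega))
  obtain ⟨K₁, hK₁⟩ := eventually_atTop.mp
    (hε.eventually_lt_const (show (0:ℝ) < min (1/5) (c/2) by positivity))
  obtain ⟨M, hM⟩ := exists_nat_gt (2*((K₀:ℝ)+1)/c + (2*(K₀:ℝ) + 2*(K₁:ℝ) + 2))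
  refine Set.infinite_of_injective_forall_mem
    (f := fun j : ℕ => (Stmt3Aux.pell (M + j)).2) ?_ ?_
  · have hsm : StrictMono (fun j : ℕ => (Stmt3Aux.pell (M + j)).2) := by
      apply strictMono_nat_of_lt_succ
      intro j
      exact Stmt3Aux.pell_lt (M + j)
    exact hsm.injective
  · intro j
    simp only [Set.mem_setOf_eq]
    set N : ℕ := (Stmt3Aux.pell (M + j)).2 with hN_def
    set x : ℕ := (Stmt3Aux.pell (M + j)).1 with hx_def
    have hx2I : (x:ℤ)^2 = 8*(N:ℤ)^2+1 := Stmt3Aux.pell_sq (M + j)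
    have hxo : x % 2 = 1 := (Stmt3Aux.pell_odd (M + j)).1
    have hNo : N % 2 = 1 := (Stmt3Aux.pell_odd (M + j)).2
    have hN1 : 1 ≤ N := (Stmt3Aux.pell_pos (M + j)).2
    have hNgeM : M + j + 1 ≤ N := Stmt3Aux.pell_ge (M + j)
    have hMr : (M:ℝ) ≤ (N:ℝ) := by
      have hMN : M ≤ N := by omega
      exact_mod_cast hMN
    have hNpos : (0:ℝ) < (N:ℝ) := by
      have h1 : (1:ℝ) ≤ (N:ℝ) := by exact_mod_cast hN1
      linarith
    have hNbig : 2*K₀ + 2*K₁ + 2 ≤ N := by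
      have h0 : (0:ℝ) ≤ 2*((K₀:ℝ)+1)/c := by positivity
      have h1 : ((2*K₀ + 2*K₁ + 2 : ℕ) : ℝ) < (N:ℝ) := by push_cast; linarith
      have h2 := Nat.cast_lt.mp h1
      omega
    have hcN : ((K₀:ℝ)+1)/(N:ℝ) < c/2 := by
      have h0 : (0:ℝ) ≤ 2*(K₀:ℝ) + 2*(K₁:ℝ) + 2 := by positivity
      have h1 : 2*((K₀:ℝ)+1)/c < (N:ℝ) := by linarith
      rw [div_lt_iff₀ hc_pos] at h1
      rw [div_lt_iff₀ hNpos]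
      nlinarith
    intro hmem
    rw [Set.mem_add] at hmem
    obtain ⟨a, ha, b, hb, hab⟩ := hmem
    have haA : fpa (Real.sqrt 2 * (a:ℝ)^2) ≤ ε a := ha
    have hbA : fpa (Real.sqrt 2 * (b:ℝ)^2) ≤ ε b := hb
    rcases le_or_gt a K₀ with hsmall | ha1
    · -- a small
      have h2a : 2*a ≤ N := by omega
      have key := Stmt3Aux.small_ineq x N a b hx2I hxo hNo hN1 hab h2a
      have hεb : ε b < min (1/5) (c/2) := hK₁ b (by omega)
      have hεb2 : ε b < c/2 := lt_of_lt_of_le hεb (min_le_right _ _)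
      have hFa : c ≤ fpa (Real.sqrt 2*(a:ℝ)^2 + 1/2 - Real.sqrt 2/16) := hc_le a hsmall
      have haK : ((a:ℝ)+1)/(N:ℝ) ≤ ((K₀:ℝ)+1)/(N:ℝ) := by
        have hcast : (a:ℝ) ≤ (K₀:ℝ) := by exact_mod_cast hsmall
        gcongr
      linarith [key]
    rcases le_or_gt b K₀ with hsmallb | hb1
    · -- b small
      have h2b : 2*b ≤ N := by omega
      have hab' : b + a = N := by omega
      have key := Stmt3Aux.small_ineq x N b a hx2I hxo hNo hN1 hab' h2b
      have hεa : ε a < min (1/5) (c/2) := hK₁ a (by omega)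
      have hεa2 : ε a < c/2 := lt_of_lt_of_le hεa (min_le_right _ _)
      have hFb : c ≤ fpa (Real.sqrt 2*(b:ℝ)^2 + 1/2 - Real.sqrt 2/16) := hc_le b hsmallb
      have hbK : ((b:ℝ)+1)/(N:ℝ) ≤ ((K₀:ℝ)+1)/(N:ℝ) := by
        have hcast : (b:ℝ) ≤ (K₀:ℝ) := by exact_mod_cast hsmallb
        gcongr
      linarith
    · -- both large
      have hmain := Stmt3Aux.main_ineq x N a b hx2I hxo hNo hN1 hab
      have hεa : ε a < 1/5 := hK₀ a (by omega)
      have hεb : ε b < 1/5 := hK₀ b (by omega)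
      linarith
end

section
/- Let d be a positive integer that is not a perfect square and let α = a/c + (b/c)·√d with a, b, c integers, c ≠ 0, b ≠ 0 (so α ∈ ℚ(√d) \ ℚ). Then there exists ε₁ = ε₁(α) > 0 such that the following holds: if either (ε(n) ≤ ε₀ for all n for some ε₀ < ε₁) or (ε(n) → 0 as n → ∞), then A(ε,α) is not a basis of order 2. -/
open Filter
open scoped Pointwise

namespace Stmt5

lemma fpa_le (x : ℝ) (z : ℤ) : fpa x ≤ |x - z| := round_le x z

lemma fpa_nonneg (x : ℝ) : 0 ≤ fpa x := abs_nonneg _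

lemma fpa_sub_le (a b : ℝ) : fpa (a - b) ≤ fpa a + fpa b := by
  have h := fpa_le (a - b) (round a - round b)
  refine h.trans ?_
  have he : (a - b) - ((round a - round b : ℤ) : ℝ) = (a - round a) - (b - round b) := by
    push_cast; ring
  rw [he]
  exact abs_sub _ _

lemma fpa_pos {x : ℝ} (h : Irrational x) : 0 < fpa x :=
  abs_pos.mpr (sub_ne_zero.mpr (h.ne_int _))

/-! ### Pell sequence machinery -/

def ps (D x0 y0 : ℤ) : ℕ → ℤ × ℤ
  | 0 => (1, 0)
  | k + 1 => (x0 * (ps D x0 y0 k).1 + D * y0 * (ps D x0 y0 k).2,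
              x0 * (ps D x0 y0 k).2 + y0 * (ps D x0 y0 k).1)

variable {D x0 y0 : ℤ}

lemma ps_norm (h : x0^2 - D*y0^2 = 1) : ∀ k, (ps D x0 y0 k).1^2 - D*(ps D x0 y0 k).2^2 = 1
  | 0 => by simp [ps]
  | k+1 => by
    have ih := ps_norm h k
    simp only [ps]
    linear_combination ((ps D x0 y0 k).1^2 - D*(ps D x0 y0 k).2^2) * h + ih

lemma ps_pos (hx0 : 1 ≤ x0) (hy0 : 1 ≤ y0) (hD : 2 ≤ D) :
    ∀ k, 1 ≤ (ps D x0 y0 k).1 ∧ 0 ≤ (ps D x0 y0 k).2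
  | 0 => by simp [ps]
  | k+1 => by
    obtain ⟨h1, h2⟩ := ps_pos hx0 hy0 hD k
    have ha : 1*1 ≤ x0 * (ps D x0 y0 k).1 := mul_le_mul hx0 h1 (by norm_num) (by linarith)
    have hb : 0 ≤ D * y0 * (ps D x0 y0 k).2 := mul_nonneg (mul_nonneg (by linarith) (by linarith)) h2
    have hc : 0 ≤ x0 * (ps D x0 y0 k).2 := mul_nonneg (by linarith) h2
    have hd : 0 ≤ y0 * (ps D x0 y0 k).1 := mul_nonneg (by linarith) (by linarith)
    constructor
    · simp only [ps]; linarith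
    · simp only [ps]; linarith

lemma ps_snd_succ_pos (hx0 : 1 ≤ x0) (hy0 : 1 ≤ y0) (hD : 2 ≤ D) (k : ℕ) :
    1 ≤ (ps D x0 y0 (k+1)).2 := by
  obtain ⟨h1, h2⟩ := ps_pos hx0 hy0 hD k
  have hd : 1*1 ≤ y0 * (ps D x0 y0 k).1 := mul_le_mul hy0 h1 (by norm_num) (by linarith)
  have hc : 0 ≤ x0 * (ps D x0 y0 k).2 := mul_nonneg (by linarith) h2
  simp only [ps]; linarith

def pmul (D : ℤ) (p q : ℤ × ℤ) : ℤ × ℤ := (p.1*q.1 + D*p.2*q.2, p.1*q.2 + p.2*q.1)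

lemma ps_add (j : ℕ) : ∀ k, ps D x0 y0 (j + k) = pmul D (ps D x0 y0 j) (ps D x0 y0 k)
  | 0 => by simp [ps, pmul]
  | k+1 => by
    have ih := ps_add j k
    show ps D x0 y0 ((j+k)+1) = _
    rw [show ps D x0 y0 ((j+k)+1) = (x0 * (ps D x0 y0 (j+k)).1 + D * y0 * (ps D x0 y0 (j+k)).2,
              x0 * (ps D x0 y0 (j+k)).2 + y0 * (ps D x0 y0 (j+k)).1) from rfl, ih]
    show _ = pmul D _ (x0 * (ps D x0 y0 k).1 + D * y0 * (ps D x0 y0 k).2,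
              x0 * (ps D x0 y0 k).2 + y0 * (ps D x0 y0 k).1)
    simp only [pmul, Prod.mk.injEq]
    constructor <;> ring

lemma ps_period (h : x0^2 - D*y0^2 = 1) (M : ℕ) (hM : M ≠ 0) :
    ∃ T, 0 < T ∧ (ps D x0 y0 T).1 ≡ 1 [ZMOD M] ∧ (ps D x0 y0 T).2 ≡ 0 [ZMOD M] := by
  haveI : NeZero M := ⟨hM⟩
  set f : ℕ → ZMod M × ZMod M := fun k => (((ps D x0 y0 k).1 : ZMod M), ((ps D x0 y0 k).2 : ZMod M)) with hf
  have down : ∀ p q : ℕ, f (p+1) = f (q+1) → f p = f q := by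
    intro p q hpq
    have idx : ∀ k, (ps D x0 y0 k).1 = x0*(ps D x0 y0 (k+1)).1 - D*y0*(ps D x0 y0 (k+1)).2 := by
      intro k
      rw [show ps D x0 y0 (k+1) = (x0 * (ps D x0 y0 k).1 + D * y0 * (ps D x0 y0 k).2,
              x0 * (ps D x0 y0 k).2 + y0 * (ps D x0 y0 k).1) from rfl]
      linear_combination (-(ps D x0 y0 k).1) * h
    have idy : ∀ k, (ps D x0 y0 k).2 = x0*(ps D x0 y0 (k+1)).2 - y0*(ps D x0 y0 (k+1)).1 := by
      intro k
      rw [show ps D x0 y0 (k+1) = (x0 * (ps D x0 y0 k).1 + D * y0 * (ps D x0 y0 k).2,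
              x0 * (ps D x0 y0 k).2 + y0 * (ps D x0 y0 k).1) from rfl]
      linear_combination (-(ps D x0 y0 k).2) * h
    have h1 := congrArg Prod.fst hpq
    have h2 := congrArg Prod.snd hpq
    simp only [hf] at h1 h2 ⊢
    ext
    · show ((ps D x0 y0 p).1 : ZMod M) = ((ps D x0 y0 q).1 : ZMod M)
      rw [idx p, idx q]; push_cast; rw [h1, h2]
    · show ((ps D x0 y0 p).2 : ZMod M) = ((ps D x0 y0 q).2 : ZMod M)
      rw [idy p, idy q]; push_cast; rw [h1, h2]
  have main : ∀ i T : ℕ, f i = f (i + T) → f 0 = f T := by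
    intro i
    induction i with
    | zero => intro T hT; simpa using hT
    | succ p ih =>
      intro T hT
      apply ih
      apply down
      rw [show p + 1 + T = (p + T) + 1 from by omega] at hT
      exact hT
  obtain ⟨i, j, hij, hfe⟩ := Finite.exists_ne_map_eq_of_infinite f
  rcases hij.lt_or_gt with hlt | hlt
  · refine ⟨j - i, by omega, ?_, ?_⟩
    · have := main i (j - i) (by rw [show i + (j - i) = j from by omega]; exact hfe)
      have h1 := congrArg Prod.fst this
      simp only [hf, ps] at h1
      exact (ZMod.intCast_eq_intCast_iff _ _ _).mp h1.symm
    · have := main i (j - i) (by rw [show i + (j - i) = j from by omega]; exact hfe)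
      have h2 := congrArg Prod.snd this
      simp only [hf, ps] at h2
      exact (ZMod.intCast_eq_intCast_iff _ _ _).mp h2.symm
  · refine ⟨i - j, by omega, ?_, ?_⟩
    · have := main j (i - j) (by rw [show j + (i - j) = i from by omega]; exact hfe.symm)
      have h1 := congrArg Prod.fst this
      simp only [hf, ps] at h1
      exact (ZMod.intCast_eq_intCast_iff _ _ _).mp h1.symm
    · have := main j (i - j) (by rw [show j + (i - j) = i from by omega]; exact hfe.symm)
      have h2 := congrArg Prod.snd this
      simp only [hf, ps] at h2
      exact (ZMod.intCast_eq_intCast_iff _ _ _).mp h2.symm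

lemma odd_of_pell {D x y : ℤ} (h : x^2 - D*y^2 = 1) (hy : Even y) : Odd x := by
  rcases Int.even_or_odd x with hx | hx
  · exfalso
    obtain ⟨t, ht⟩ := hx
    obtain ⟨u, hu⟩ := hy
    have h2 : 4*(t*t) - 4*(D*(u*u)) = 1 := by
      rw [ht, hu] at h; linear_combination h
    have h3 : ∀ A B : ℤ, 4*A - 4*B = 1 → False := by intro A B hAB; omega
    exact h3 _ _ h2
  · exact hx

/-! ### Key analytic estimates -/

section Key
variable {s : ℝ} {x y o : ℤ} {e : ℕ}

lemma key_facts {D : ℤ} (hs2 : s^2 = (D:ℝ)) (hs1 : 1 < s)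
    (hnorm : x^2 - D*y^2 = 1) (hx1 : 1 ≤ x) (hy1 : 1 ≤ y) :
    1 < (x:ℝ) + y*s ∧ ((x:ℝ) - y*s) * ((x:ℝ) + y*s) = 1 ∧ (y:ℝ)*s < x := by
  have hs0 : (0:ℝ) < s := lt_trans one_pos hs1
  have hx1' : (1:ℝ) ≤ (x:ℝ) := by exact_mod_cast hx1
  have hy1' : (1:ℝ) ≤ (y:ℝ) := by exact_mod_cast hy1
  have hnormR : (x:ℝ)^2 - (D:ℝ)*(y:ℝ)^2 = 1 := by exact_mod_cast hnorm
  have hr1 : 1 < (x:ℝ) + y*s := by nlinarith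
  have hprod : ((x:ℝ) - y*s) * ((x:ℝ) + y*s) = 1 := by
    linear_combination hnormR + (-(y:ℝ)^2) * hs2
  have hxys : (y:ℝ)*s < x := by nlinarith
  exact ⟨hr1, hprod, hxys⟩

lemma keyI {D : ℤ} (hs2 : s^2 = (D:ℝ)) (hs1 : 1 < s) (he : 1 ≤ e)
    (hnorm : x^2 - D*y^2 = 1) (hx1 : 1 ≤ x) (hy1 : 1 ≤ y)
    (hxodd : Odd x) (hoodd : Odd o) (hyo : y = 2^e * o)
    (m n : ℕ) (hmn : (m:ℤ) + n = o) :
    1/2^e - 1/(2*s*4^e) ≤ fpa (s*(m:ℝ)^2) + fpa (s*(n:ℝ)^2) := by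
  obtain ⟨hr1, hprod, hxys⟩ := key_facts hs2 hs1 hnorm hx1 hy1
  have hs0 : (0:ℝ) < s := lt_trans one_pos hs1
  set r : ℝ := (x:ℝ) + y*s with hrdef
  have hr0 : (0:ℝ) < r := by linarith
  set k : ℤ := (n:ℤ) - m with hkdef
  have hkodd : Odd k := by
    have hko : k = o - 2*(m:ℤ) := by omega
    rw [hko]
    exact hoodd.sub_even (even_two_mul (m:ℤ))
  set X : ℝ := s*(n:ℝ)^2 - s*(m:ℝ)^2 with hXdef
  set w : ℤ := round X with hwdef
  set K : ℤ := x*k - 2^e*w with hKdef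
  have hKodd : Odd K := by
    refine (hxodd.mul hkodd).sub_even (Even.mul_right ?_ w)
    rcases Nat.exists_eq_add_of_le he with ⟨e', rfl⟩
    exact ⟨2^e', by rw [pow_add, pow_one]; ring⟩
  have hK1 : (1:ℝ) ≤ |(K:ℝ)| := by
    rw [Int.odd_iff] at hKodd
    have : (1:ℤ) ≤ |K| := Int.one_le_abs (by omega)
    exact_mod_cast this
  have h2e : (0:ℝ) < (2:ℝ)^e := by positivity
  have h4e : ((4:ℝ))^e = 2^e * 2^e := by
    rw [show (4:ℝ) = 2*2 by norm_num, mul_pow]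
  have hcast_n : ((n:ℝ)) = (o:ℝ) - m := by
    have : (n:ℤ) = o - m := by omega
    exact_mod_cast this
  have hcast_k : ((k:ℝ)) = (o:ℝ) - 2*m := by
    have : k = o - 2*(m:ℤ) := by omega
    exact_mod_cast this
  have hcast_y : (y:ℝ) = 2^e * o := by exact_mod_cast hyo
  have hprod' : ((x:ℝ) - (2^e * o)*s) * r = 1 := by rw [← hcast_y]; exact hprod
  have hkey : (2:ℝ)^e * r * X = (x:ℝ)*k*r - k := by
    rw [hXdef, hcast_n, hcast_k]
    linear_combination (-(((o:ℝ) - 2*(m:ℝ)))) * hprod'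
  have hX : X = ((x:ℝ)*k*r - k)/(2^e * r) := by
    rw [eq_div_iff (by positivity)]
    linear_combination hkey
  have hXw : X - w = (K:ℝ)/2^e - (k:ℝ)/(r*2^e) := by
    rw [hX, hKdef]
    push_cast
    field_simp
    ring
  have habs : |(K:ℝ)/2^e| - |(k:ℝ)/(r*2^e)| ≤ |X - w| := by
    rw [hXw]; exact abs_sub_abs_le_abs_sub _ _
  have hKb : 1/2^e ≤ |(K:ℝ)/2^e| := by
    rw [abs_div, abs_of_pos h2e]
    exact div_le_div_of_nonneg_right hK1 h2e.le
  have hk_abs : |(k:ℝ)| ≤ (o:ℝ) := by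
    have h1 : |k| ≤ o := abs_le.mpr ⟨by omega, by omega⟩
    calc |(k:ℝ)| = ((|k| : ℤ) : ℝ) := by push_cast; rfl
    _ ≤ (o:ℝ) := by exact_mod_cast h1
  have hyr : (y:ℝ)*(2*s) < r := by
    have hh : (y:ℝ)*(2*s) = (y:ℝ)*s + y*s := by ring
    rw [hh, hrdef]
    linarith
  have hkb2 : |(k:ℝ)/(r*2^e)| ≤ 1/(2*s*4^e) := by
    rw [abs_div, abs_of_pos (by positivity : (0:ℝ) < r*2^e), div_le_div_iff₀ (by positivity) (by positivity)]
    have e1 : |(k:ℝ)| * (2*s*4^e) ≤ (o:ℝ) * (2*s*4^e) := by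
      apply mul_le_mul_of_nonneg_right hk_abs; positivity
    have e2 : (o:ℝ)*(2*s*4^e) = ((y:ℝ)*(2*s))*2^e := by
      rw [h4e, hcast_y]; ring
    have e3 : ((y:ℝ)*(2*s))*2^e ≤ r*2^e := by
      apply mul_le_mul_of_nonneg_right hyr.le h2e.le
    calc |(k:ℝ)| * (2*s*4^e) ≤ ((y:ℝ)*(2*s))*2^e := by rw [← e2]; exact e1
    _ ≤ r*2^e := e3
    _ = 1*(r*2^e) := by ring
  have hfpaX : 1/2^e - 1/(2*s*4^e) ≤ fpa X := by
    have hfp : fpa X = |X - w| := rfl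
    rw [hfp]
    linarith
  have := fpa_sub_le (s*(n:ℝ)^2) (s*(m:ℝ)^2)
  rw [← hXdef] at this
  linarith

lemma keyII {D : ℤ} (hs2 : s^2 = (D:ℝ)) (hs1 : 1 < s)
    (hnorm : x^2 - D*y^2 = 1) (hx1 : 1 ≤ x) (hy1 : 1 ≤ y)
    (hyo : y = 2^e * o)
    (m n : ℕ) (hmn : (m:ℤ) + n = o) :
    (fpa (2^e*s*(m:ℝ)^2 - 1/(2*s*2^e)) - (2*(m:ℝ)+1)/((x:ℝ) + y*s)) / 2^e
      ≤ fpa (s*(n:ℝ)^2) := by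
  obtain ⟨hr1, hprod, hxys⟩ := key_facts hs2 hs1 hnorm hx1 hy1
  have hs0 : (0:ℝ) < s := lt_trans one_pos hs1
  set r : ℝ := (x:ℝ) + y*s with hrdef
  have hr0 : (0:ℝ) < r := by linarith
  have h2e : (0:ℝ) < (2:ℝ)^e := by positivity
  set w : ℤ := round (s*(n:ℝ)^2) with hwdef
  set K : ℤ := 2^e*w - x*(o - 2*(m:ℤ)) with hKdef
  have hcast_n : ((n:ℝ)) = (o:ℝ) - m := by
    have : (n:ℤ) = o - m := by omega
    exact_mod_cast this
  have hcast_y : (y:ℝ) = 2^e * o := by exact_mod_cast hyo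
  have hprod' : ((x:ℝ) - (2^e * o)*s) * r = 1 := by rw [← hcast_y]; exact hprod
  have hkey : (2:ℝ)^e*r*(s*(n:ℝ)^2) = 2^e*r*(s*(m:ℝ)^2) + (x:ℝ)*((o:ℝ)-2*m)*r - ((o:ℝ)-2*m) := by
    rw [hcast_n]
    linear_combination (-(((o:ℝ) - 2*(m:ℝ)))) * hprod'
  have hXexpr : s*(n:ℝ)^2 = (2^e*r*(s*(m:ℝ)^2) + (x:ℝ)*((o:ℝ)-2*m)*r - ((o:ℝ)-2*m))/(2^e*r) := by
    rw [eq_div_iff (by positivity)]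
    linear_combination hkey
  have hXn : s*(n:ℝ)^2 - w = (2^e*s*(m:ℝ)^2 - ((o:ℝ)-2*m)/r - (K:ℝ))/2^e := by
    rw [hXexpr, hKdef]
    push_cast
    field_simp
    ring
  have hyr : (y:ℝ)*(2*s) < r := by
    have hh : (y:ℝ)*(2*s) = (y:ℝ)*s + y*s := by ring
    rw [hh, hrdef]; linarith
  have hoyr : (o:ℝ)*(2*s*2^e) = (y:ℝ)*(2*s) := by rw [hcast_y]; ring
  have hA : (o:ℝ)/r ≤ 1/(2*s*2^e) := by
    rw [div_le_div_iff₀ hr0 (by positivity)]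
    calc (o:ℝ)*(2*s*2^e) = (y:ℝ)*(2*s) := hoyr
    _ ≤ r := hyr.le
    _ = 1*r := by ring
  have hB : 1/(2*s*2^e) - (o:ℝ)/r ≤ 1/r := by
    rw [div_sub_div _ _ (by positivity : (2*s*2^e : ℝ) ≠ 0) hr0.ne', div_le_div_iff₀ (by positivity) hr0]
    have hinv : (x:ℝ) - y*s = 1/r := by
      rw [eq_div_iff hr0.ne']; exact hprod
    have hinv_lt : (x:ℝ) - y*s < 1 := by
      rw [hinv]; exact (div_lt_one hr0).mpr hr1
    have h2epow : (1:ℝ) ≤ 2^e := by simpa using pow_le_pow_right₀ (by norm_num : (1:ℝ) ≤ 2) (Nat.zero_le e)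
    have h2s : (1:ℝ) ≤ 2*s*2^e := by nlinarith
    calc (1*r - 2*s*2^e*(o:ℝ))*r = (r - (o:ℝ)*(2*s*2^e))*r := by ring
    _ = (r - y*(2*s))*r := by rw [hoyr]
    _ = ((x:ℝ) - y*s)*r := by rw [hrdef]; ring
    _ = 1 := hprod
    _ ≤ 1*(2*s*2^e*r) := by nlinarith
  have hτ : |((o:ℝ)-2*m)/r - 1/(2*s*2^e)| ≤ (2*(m:ℝ)+1)/r := by
    have hsplit : ((o:ℝ)-2*m)/r - 1/(2*s*2^e) = ((o:ℝ)/r - 1/(2*s*2^e)) - (2*m)/r := by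
      ring
    rw [hsplit]
    have h1 : |(o:ℝ)/r - 1/(2*s*2^e)| ≤ 1/r := by
      rw [abs_le]
      constructor <;> [linarith; linarith]
    have h2 : |(2*(m:ℝ))/r| = (2*m)/r := by
      rw [abs_of_nonneg]; positivity
    calc |((o:ℝ)/r - 1/(2*s*2^e)) - (2*m)/r| ≤ |(o:ℝ)/r - 1/(2*s*2^e)| + |(2*(m:ℝ))/r| :=
          abs_sub _ _
    _ ≤ 1/r + (2*m)/r := by rw [h2]; exact add_le_add_left h1 _
    _ = (2*(m:ℝ)+1)/r := by ring
  have hfpa_le : fpa (2^e*s*(m:ℝ)^2 - 1/(2*s*2^e)) ≤ |2^e*s*(m:ℝ)^2 - 1/(2*s*2^e) - (K:ℝ)| :=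
    fpa_le _ K
  have hmain : fpa (2^e*s*(m:ℝ)^2 - 1/(2*s*2^e)) - (2*(m:ℝ)+1)/r
      ≤ |2^e*s*(m:ℝ)^2 - ((o:ℝ)-2*m)/r - (K:ℝ)| := by
    have htri : |2^e*s*(m:ℝ)^2 - 1/(2*s*2^e) - (K:ℝ)| - |((o:ℝ)-2*m)/r - 1/(2*s*2^e)|
        ≤ |2^e*s*(m:ℝ)^2 - ((o:ℝ)-2*m)/r - (K:ℝ)| := by
      have hid : (2^e*s*(m:ℝ)^2 - ((o:ℝ)-2*m)/r - (K:ℝ))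
          = (2^e*s*(m:ℝ)^2 - 1/(2*s*2^e) - (K:ℝ)) - (((o:ℝ)-2*m)/r - 1/(2*s*2^e)) := by ring
      rw [hid]
      exact abs_sub_abs_le_abs_sub _ _
    linarith
  have hfpan : fpa (s*(n:ℝ)^2) = |s*(n:ℝ)^2 - w| := rfl
  rw [hfpan, hXn, abs_div, abs_of_pos h2e, div_le_div_iff₀ (by positivity) h2e]
  apply mul_le_mul_of_nonneg_right hmain h2e.le

lemma deltap_pos {D : ℤ} (hs2 : s^2 = (D:ℝ)) (hs1 : 1 < s) (hirr : Irrational s)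
    (hD2 : 2 ≤ D) (e : ℕ) (m : ℕ) :
    0 < fpa (2^e*s*(m:ℝ)^2 - 1/(2*s*2^e)) := by
  have hs0 : (0:ℝ) < s := lt_trans one_pos hs1
  have hD0 : ((D:ℝ)) ≠ 0 := by
    have : (2:ℝ) ≤ (D:ℝ) := by exact_mod_cast hD2
    linarith
  apply fpa_pos
  have hKne : (2^(2*e+1)*D*(m:ℤ)^2 - 1 : ℤ) ≠ 0 := by
    intro h
    have h2 : (2:ℤ) ∣ 2^(2*e+1)*D*(m:ℤ)^2 := ⟨2^(2*e)*D*(m:ℤ)^2, by ring⟩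
    omega
  have hden : ((2^(e+1)*D : ℤ)) ≠ 0 := by
    intro h
    rw [mul_eq_zero] at h
    rcases h with h | h
    · exact absurd h (by positivity)
    · omega
  have heq : 2^e*s*(m:ℝ)^2 - 1/(2*s*2^e)
      = (((2^(2*e+1)*D*(m:ℤ)^2 - 1 : ℤ)):ℝ) * s / ((2^(e+1)*D : ℤ):ℝ) := by
    have hden' : ((2^(e+1)*D : ℤ):ℝ) ≠ 0 := by exact_mod_cast hden
    push_cast
    push_cast at hden'
    field_simp
    linear_combination (2^e*2:ℝ) * hs2
  rw [heq]
  exact (hirr.intCast_mul hKne).div_intCast hden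

end Key

/-- Reduction from `α` to `s = |b|·√d`. -/
lemma fpa_scale (d : ℕ) (a b c : ℤ) (hc : c ≠ 0) (α : ℝ)
    (hα : α = (a : ℝ) / (c : ℝ) + ((b : ℝ) / (c : ℝ)) * Real.sqrt d)
    (s : ℝ) (hs : s = |(b:ℝ)| * Real.sqrt d) (k : ℕ) :
    fpa (s * (k:ℝ)^2) ≤ |(c:ℝ)| * fpa (α * (k:ℝ)^2) := by
  set z := round (α*(k:ℝ)^2) with hz
  have hcR : ((c:ℝ)) ≠ 0 := Int.cast_ne_zero.mpr hc
  have hbd : (b:ℝ) * Real.sqrt d * (k:ℝ)^2 - ((c*z - a*k^2 : ℤ):ℝ) = (c:ℝ)*(α*(k:ℝ)^2 - z) := by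
    rw [hα]; push_cast; field_simp; ring
  have hfpaz : fpa (α*(k:ℝ)^2) = |α*(k:ℝ)^2 - z| := rfl
  rcases le_or_gt 0 b with hb0 | hb0
  · have habs : |(b:ℝ)| = (b:ℝ) := abs_of_nonneg (by exact_mod_cast hb0)
    calc fpa (s * (k:ℝ)^2) ≤ |s * (k:ℝ)^2 - ((c*z - a*k^2 : ℤ):ℝ)| := fpa_le _ _
    _ = |(c:ℝ)*(α*(k:ℝ)^2 - z)| := by rw [hs, habs, hbd]
    _ = |(c:ℝ)| * |α*(k:ℝ)^2 - z| := abs_mul _ _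
    _ = |(c:ℝ)| * fpa (α*(k:ℝ)^2) := by rw [hfpaz]
  · have habs : |(b:ℝ)| = -(b:ℝ) := abs_of_neg (by exact_mod_cast hb0)
    calc fpa (s * (k:ℝ)^2) ≤ |s * (k:ℝ)^2 - ((-(c*z - a*k^2) : ℤ):ℝ)| := fpa_le _ _
    _ = |-((b:ℝ) * Real.sqrt d * (k:ℝ)^2 - ((c*z - a*k^2 : ℤ):ℝ))| := by
        rw [hs, habs]; push_cast; ring_nf
    _ = |(c:ℝ)*(α*(k:ℝ)^2 - z)| := by rw [abs_neg, hbd]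
    _ = |(c:ℝ)| * |α*(k:ℝ)^2 - z| := abs_mul _ _
    _ = |(c:ℝ)| * fpa (α*(k:ℝ)^2) := by rw [hfpaz]

end Stmt5

open Stmt5 in
set_option maxHeartbeats 2000000 in
theorem stmt_5 (d : ℕ) (hd : 0 < d) (hsq : ¬ IsSquare d)
    (a b c : ℤ) (hc : c ≠ 0) (hb : b ≠ 0)
    (α : ℝ) (hα : α = (a : ℝ) / (c : ℝ) + ((b : ℝ) / (c : ℝ)) * Real.sqrt d) :
    ∃ ε₁ > (0 : ℝ), ∀ ε : ℕ → ℝ,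
      ((∃ ε₀ < ε₁, ∀ n, ε n ≤ ε₀) ∨ Tendsto ε atTop (nhds 0)) →
      ¬ ∀ᶠ N : ℕ in atTop, N ∈ A ε α + A ε α := by
  classical
  set D : ℤ := b^2 * d with hDdef
  have hd1 : (1:ℤ) ≤ (d:ℤ) := by exact_mod_cast hd
  have hb2 : (1:ℤ) ≤ b^2 := by
    have h1 : b^2 ≠ 0 := pow_ne_zero 2 hb
    have h2 : 0 ≤ b^2 := sq_nonneg b
    omega
  have hD1 : 1 ≤ D := by nlinarith
  have hDns : ¬ IsSquare D := by
    rintro ⟨t, ht⟩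
    have h1 : b^2 ∣ t^2 := ⟨(d:ℤ), by rw [sq, ← ht, hDdef]⟩
    obtain ⟨u, hu⟩ := (Int.pow_dvd_pow_iff two_ne_zero).mp h1
    have hd2 : (d:ℤ) = u^2 := by
      have hbne : b^2 ≠ 0 := pow_ne_zero 2 hb
      have h3 : b^2 * (d:ℤ) = b^2 * u^2 := by
        calc b^2*(d:ℤ) = D := hDdef.symm
        _ = t*t := ht
        _ = (b*u)*(b*u) := by rw [hu]
        _ = b^2*u^2 := by ring
      exact mul_left_cancel₀ hbne h3
    apply hsq
    have h4 : IsSquare ((d:ℤ)) := ⟨u, by rw [hd2]; ring⟩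
    rwa [Int.isSquare_natCast_iff] at h4
  have hD2 : 2 ≤ D := by
    rcases eq_or_lt_of_le hD1 with h | h
    · exact absurd ⟨1, by omega⟩ hDns
    · omega
  have hD0 : 0 < D := by omega
  set s : ℝ := |(b:ℝ)| * Real.sqrt d with hsdef
  have hs2 : s^2 = (D:ℝ) := by
    rw [hsdef, mul_pow, sq_abs, Real.sq_sqrt (by positivity : (0:ℝ) ≤ (d:ℝ))]
    rw [hDdef]; push_cast; ring
  have hirr : Irrational s := by
    have h1 : Irrational (Real.sqrt d) := irrational_sqrt_natCast_iff.mpr hsq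
    have h2 : Irrational (((|b| : ℤ):ℝ) * Real.sqrt d) := h1.intCast_mul (by simpa using hb)
    rw [hsdef]
    rwa [show ((|b| : ℤ):ℝ) = |(b:ℝ)| from by push_cast; rfl] at h2
  have hs_nonneg : 0 ≤ s := by rw [hsdef]; positivity
  have hDR2 : (2:ℝ) ≤ (D:ℝ) := by exact_mod_cast hD2
  have hs1 : 1 < s := by nlinarith
  have hs0 : (0:ℝ) < s := by linarith
  -- Pell
  obtain ⟨x0', y0', hP, hy0'⟩ := Pell.exists_of_not_isSquare hD0 hDns
  set x0 := |x0'| with hx0def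
  set y0 := |y0'| with hy0def
  have hnorm0 : x0^2 - D*y0^2 = 1 := by rw [hx0def, hy0def, sq_abs, sq_abs]; exact hP
  have hy0 : 1 ≤ y0 := Int.one_le_abs hy0'
  have hy0sq : 1 ≤ y0^2 := by nlinarith
  have hx0nn : 0 ≤ x0 := abs_nonneg x0'
  have hx0 : 1 ≤ x0 := by nlinarith
  -- Y and e
  set Y : ℤ := (ps D x0 y0 2).2 with hYdef
  have hY1 : 1 ≤ Y := ps_snd_succ_pos hx0 hy0 hD2 1
  have hYeven : Even Y := by
    refine ⟨x0*y0, ?_⟩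
    show (ps D x0 y0 2).2 = _
    simp only [ps]
    ring
  obtain ⟨e, wodd, hwodd, hYfact⟩ := Nat.exists_eq_two_pow_mul_odd (n := Y.toNat) (by omega)
  have hYint : Y = 2^e * (wodd:ℤ) := by
    have h1 : ((Y.toNat : ℤ)) = Y := Int.toNat_of_nonneg (by omega)
    rw [← h1, hYfact]; push_cast; ring
  have he1 : 1 ≤ e := by
    rcases Nat.eq_zero_or_pos e with he | he
    · exfalso
      obtain ⟨u, hu⟩ := hYeven
      obtain ⟨v, hv⟩ := hwodd
      rw [he, pow_zero, one_mul] at hYint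
      omega
    · exact he
  set M : ℕ := 2^(e+1) with hMdef
  obtain ⟨T, hT0, hT1, hT2⟩ := ps_period hnorm0 M (by positivity)
  -- congruences of the subsequence
  have hcong : ∀ j : ℕ, ((ps D x0 y0 (2 + j*T)).1 ≡ (ps D x0 y0 2).1 [ZMOD M]) ∧
      ((ps D x0 y0 (2 + j*T)).2 ≡ (ps D x0 y0 2).2 [ZMOD M]) := by
    intro j
    induction j with
    | zero => norm_num
    | succ p ih =>
      have heq : 2 + (p+1)*T = (2 + p*T) + T := by ring
      rw [heq, ps_add]
      constructor
      · show ((ps D x0 y0 (2+p*T)).1*(ps D x0 y0 T).1 + D*(ps D x0 y0 (2+p*T)).2*(ps D x0 y0 T).2)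
          ≡ (ps D x0 y0 2).1 [ZMOD M]
        have e1 : (ps D x0 y0 (2+p*T)).1*(ps D x0 y0 T).1 + D*(ps D x0 y0 (2+p*T)).2*(ps D x0 y0 T).2
            ≡ (ps D x0 y0 (2+p*T)).1*1 + D*(ps D x0 y0 (2+p*T)).2*0 [ZMOD M] :=
          Int.ModEq.add ((Int.ModEq.refl _).mul hT1) ((Int.ModEq.refl _).mul hT2)
        have e2 : (ps D x0 y0 (2+p*T)).1*1 + D*(ps D x0 y0 (2+p*T)).2*0 = (ps D x0 y0 (2+p*T)).1 := by
          ring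
        rw [e2] at e1
        exact e1.trans ih.1
      · show ((ps D x0 y0 (2+p*T)).1*(ps D x0 y0 T).2 + (ps D x0 y0 (2+p*T)).2*(ps D x0 y0 T).1)
          ≡ (ps D x0 y0 2).2 [ZMOD M]
        have e1 : (ps D x0 y0 (2+p*T)).1*(ps D x0 y0 T).2 + (ps D x0 y0 (2+p*T)).2*(ps D x0 y0 T).1
            ≡ (ps D x0 y0 (2+p*T)).1*0 + (ps D x0 y0 (2+p*T)).2*1 [ZMOD M] :=
          Int.ModEq.add ((Int.ModEq.refl _).mul hT2) ((Int.ModEq.refl _).mul hT1)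
        have e2 : (ps D x0 y0 (2+p*T)).1*0 + (ps D x0 y0 (2+p*T)).2*1 = (ps D x0 y0 (2+p*T)).2 := by
          ring
        rw [e2] at e1
        exact e1.trans ih.2
  have hgrow : ∀ j : ℕ, (j:ℤ) ≤ (ps D x0 y0 (2 + j*T)).2 := by
    intro j
    induction j with
    | zero => simpa using (ps_pos hx0 hy0 hD2 (2+0*T)).2
    | succ p ih =>
      have heq : 2 + (p+1)*T = (2 + p*T) + T := by ring
      rw [heq, ps_add]
      have hTe : (T - 1) + 1 = T := by omega
      have h1 : 1 ≤ (ps D x0 y0 T).2 := by rw [← hTe]; exact ps_snd_succ_pos hx0 hy0 hD2 _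
      have h2 : 1 ≤ (ps D x0 y0 T).1 := (ps_pos hx0 hy0 hD2 T).1
      have h3 : 1 ≤ (ps D x0 y0 (2+p*T)).1 := (ps_pos hx0 hy0 hD2 _).1
      have h4 : 0 ≤ (ps D x0 y0 (2+p*T)).2 := (ps_pos hx0 hy0 hD2 _).2
      show (((p+1:ℕ)):ℤ) ≤ (ps D x0 y0 (2+p*T)).1*(ps D x0 y0 T).2 + (ps D x0 y0 (2+p*T)).2*(ps D x0 y0 T).1
      push_cast
      nlinarith
  -- delta and epsilon1
  have h2e : (0:ℝ) < (2:ℝ)^e := by positivity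
  have h4e : ((4:ℝ))^e = 2^e*2^e := by rw [show (4:ℝ) = 2*2 by norm_num, mul_pow]
  have h2e1 : (1:ℝ) ≤ 2^e := by
    simpa using pow_le_pow_right₀ (by norm_num : (1:ℝ) ≤ 2) (Nat.zero_le e)
  set δ : ℝ := 1/2^e - 1/(2*s*4^e) with hδdef
  have hδ : 0 < δ := by
    rw [hδdef, sub_pos, div_lt_div_iff₀ (by positivity) (by positivity)]
    rw [h4e]
    nlinarith
  clear_value δ
  have hcabs : (0:ℝ) < |(c:ℝ)| := abs_pos.mpr (Int.cast_ne_zero.mpr hc)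
  refine ⟨δ/(2*|(c:ℝ)|), div_pos hδ (by positivity), ?_⟩
  intro ε hyp H
  rw [eventually_atTop] at H
  obtain ⟨M₀, hM₀⟩ := H
  -- per-j construction
  have data : ∀ j : ℕ, ∃ N : ℕ, (j:ℤ) ≤ 2^e * (N:ℤ) ∧
      (∀ m n : ℕ, m + n = N → δ ≤ fpa (s*(m:ℝ)^2) + fpa (s*(n:ℝ)^2)) ∧
      (∀ m n : ℕ, m + n = N →
        (fpa (2^e*s*(m:ℝ)^2 - 1/(2*s*2^e)) - (2*(m:ℝ)+1)/((j:ℝ)+1)) / 2^e ≤ fpa (s*(n:ℝ)^2)) := by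
    intro j
    obtain ⟨hc1, hc2⟩ := hcong j
    set x := (ps D x0 y0 (2+j*T)).1 with hxdef
    set y := (ps D x0 y0 (2+j*T)).2 with hydef
    have hnorm : x^2 - D*y^2 = 1 := ps_norm hnorm0 _
    have hx1 : 1 ≤ x := (ps_pos hx0 hy0 hD2 _).1
    have hy1 : 1 ≤ y := by
      rw [hydef, show 2 + j*T = (1+j*T)+1 from by ring]
      exact ps_snd_succ_pos hx0 hy0 hD2 _
    obtain ⟨t, ht⟩ : ((M:ℕ):ℤ) ∣ (ps D x0 y0 2).2 - y := hc2.dvd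
    set o : ℤ := (wodd:ℤ) - 2*t with hodef
    have hoodd : Odd o := by
      refine Odd.sub_even ?_ (even_two_mul t)
      exact_mod_cast hwodd
    have hMcast : ((M:ℕ):ℤ) = 2^(e+1) := by rw [hMdef]; push_cast; ring
    have hyY : y = Y - ((M:ℕ):ℤ)*t := by rw [← hYdef] at ht; linarith
    have hyo : y = 2^e * o := by
      rw [hyY, hYint, hMcast, hodef]
      ring
    have ho1 : 1 ≤ o := by
      by_contra hcon
      push_neg at hcon
      have ho0 : o ≤ 0 := by omega
      have h2epos : (0:ℤ) < 2^e := by positivity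
      nlinarith
    have hxodd : Odd x := by
      apply odd_of_pell hnorm
      obtain ⟨e', he'⟩ := Nat.exists_eq_add_of_le he1
      exact ⟨2^e' * o, by rw [hyo, he', pow_add, pow_one]; ring⟩
    have hNcast : ((o.toNat:ℤ)) = o := Int.toNat_of_nonneg (by omega)
    refine ⟨o.toNat, ?_, ?_, ?_⟩
    · rw [hNcast, ← hyo]
      exact hgrow j
    · intro m n hmn
      have hmn' : (m:ℤ) + n = o := by
        rw [← hNcast]
        exact_mod_cast congrArg (Nat.cast : ℕ → ℤ) hmn
      rw [hδdef]
      exact keyI hs2 hs1 he1 hnorm hx1 hy1 hxodd hoodd hyo m n hmn'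
    · intro m n hmn
      have hmn' : (m:ℤ) + n = o := by
        rw [← hNcast]
        exact_mod_cast congrArg (Nat.cast : ℕ → ℤ) hmn
      have hkey := keyII hs2 hs1 hnorm hx1 hy1 hyo m n hmn'
      refine le_trans ?_ hkey
      have hyj : (j:ℝ) ≤ (y:ℝ) := by exact_mod_cast hgrow j
      have hy1R : (1:ℝ) ≤ (y:ℝ) := by exact_mod_cast hy1
      have hx1R : (1:ℝ) ≤ (x:ℝ) := by exact_mod_cast hx1
      have hjr : (j:ℝ) + 1 ≤ (x:ℝ) + y*s := by nlinarith
      have hmono : (2*(m:ℝ)+1)/((x:ℝ)+y*s) ≤ (2*(m:ℝ)+1)/((j:ℝ)+1) := by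
        apply div_le_div_of_nonneg_left (by positivity) (by positivity) hjr
      have hsub : fpa (2^e*s*(m:ℝ)^2 - 1/(2*s*2^e)) - (2*(m:ℝ)+1)/((j:ℝ)+1)
          ≤ fpa (2^e*s*(m:ℝ)^2 - 1/(2*s*2^e)) - (2*(m:ℝ)+1)/((x:ℝ)+y*s) := by linarith
      exact div_le_div_of_nonneg_right hsub h2e.le
  -- case analysis
  rcases hyp with ⟨ε₀, hε₀lt, hε₀⟩ | htend
  · obtain ⟨N, hNb, hI, _⟩ := data (2^e * M₀)
    have hNM₀ : M₀ ≤ N := by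
      have h1 : (((2^e * M₀ : ℕ)):ℤ) ≤ 2^e * (N:ℤ) := hNb
      have h2epos : (0:ℤ) < 2^e := by positivity
      have h2 : (M₀:ℤ) ≤ (N:ℤ) := by
        push_cast at h1
        nlinarith
      exact_mod_cast h2
    obtain ⟨m, hm, n, hn, hmn⟩ := Set.mem_add.mp (hM₀ N hNM₀)
    have hm' : fpa (α*(m:ℝ)^2) ≤ ε m := hm
    have hn' : fpa (α*(n:ℝ)^2) ≤ ε n := hn
    have hIm := hI m n hmn
    have h1 : fpa (s*(m:ℝ)^2) ≤ |(c:ℝ)| * ε m :=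
      le_trans (fpa_scale d a b c hc α hα s hsdef m) (mul_le_mul_of_nonneg_left hm' hcabs.le)
    have h2 : fpa (s*(n:ℝ)^2) ≤ |(c:ℝ)| * ε n :=
      le_trans (fpa_scale d a b c hc α hα s hsdef n) (mul_le_mul_of_nonneg_left hn' hcabs.le)
    have h3 : |(c:ℝ)| * ε m ≤ |(c:ℝ)| * ε₀ := mul_le_mul_of_nonneg_left (hε₀ m) hcabs.le
    have h4 : |(c:ℝ)| * ε n ≤ |(c:ℝ)| * ε₀ := mul_le_mul_of_nonneg_left (hε₀ n) hcabs.le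
    have h5 : 2*|(c:ℝ)| * ε₀ < δ := by
      have h6 := mul_lt_mul_of_pos_left hε₀lt (show (0:ℝ) < 2*|(c:ℝ)| by positivity)
      have heq : (2*|(c:ℝ)|) * (δ/(2*|(c:ℝ)|)) = δ := by field_simp
      linarith
    nlinarith
  · have hK1pos : (0:ℝ) < δ/(4*|(c:ℝ)|) := by positivity
    have h1 := htend.eventually_lt_const hK1pos
    rw [eventually_atTop] at h1
    obtain ⟨M₁, hM₁⟩ := h1
    set g : ℕ → ℝ := fun m => fpa (2^e*s*(m:ℝ)^2 - 1/(2*s*2^e)) with hgdef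
    have hne : (Finset.range (M₁+1)).Nonempty := ⟨0, by simp⟩
    set ρ : ℝ := (Finset.range (M₁+1)).inf' hne g with hρdef
    have hρ : 0 < ρ := by
      rw [hρdef, Finset.lt_inf'_iff]
      intro i _
      exact deltap_pos hs2 hs1 hirr hD2 e i
    have hK2pos : (0:ℝ) < ρ/(2^(e+2)*|(c:ℝ)|) := by positivity
    have h2 := htend.eventually_lt_const hK2pos
    rw [eventually_atTop] at h2
    obtain ⟨M₂, hM₂⟩ := h2
    set j : ℕ := 2^e*(M₀+M₁+M₂+1) + Nat.ceil ((2*(M₁:ℝ)+1)*2/ρ) with hjdef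
    obtain ⟨N, hNb, hI, hII⟩ := data j
    have hNM : M₀+M₁+M₂+1 ≤ N := by
      have h2epos : (0:ℤ) < 2^e := by positivity
      have hj1 : ((2^e*(M₀+M₁+M₂+1) : ℕ):ℤ) ≤ (j:ℤ) := by
        have : 2^e*(M₀+M₁+M₂+1) ≤ j := by rw [hjdef]; omega
        exact_mod_cast this
      have h3 : ((M₀+M₁+M₂+1 : ℕ):ℤ) ≤ (N:ℤ) := by
        have h4 : ((2^e*(M₀+M₁+M₂+1) : ℕ):ℤ) ≤ 2^e * (N:ℤ) := le_trans hj1 hNb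
        push_cast at h4 ⊢
        nlinarith
      exact_mod_cast h3
    have hjρ : (2*(M₁:ℝ)+1)*2/ρ ≤ (j:ℝ)+1 := by
      have hle := Nat.le_ceil ((2*(M₁:ℝ)+1)*2/ρ)
      have hcj : ((Nat.ceil ((2*(M₁:ℝ)+1)*2/ρ) : ℕ):ℝ) ≤ (j:ℝ) := by
        have : Nat.ceil ((2*(M₁:ℝ)+1)*2/ρ) ≤ j := by rw [hjdef]; omega
        exact_mod_cast this
      linarith
    obtain ⟨m, hm, n, hn, hmn⟩ := Set.mem_add.mp (hM₀ N (by omega))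
    have hm' : fpa (α*(m:ℝ)^2) ≤ ε m := hm
    have hn' : fpa (α*(n:ℝ)^2) ≤ ε n := hn
    have hsm : fpa (s*(m:ℝ)^2) ≤ |(c:ℝ)| * ε m :=
      le_trans (fpa_scale d a b c hc α hα s hsdef m) (mul_le_mul_of_nonneg_left hm' hcabs.le)
    have hsn : fpa (s*(n:ℝ)^2) ≤ |(c:ℝ)| * ε n :=
      le_trans (fpa_scale d a b c hc α hα s hsdef n) (mul_le_mul_of_nonneg_left hn' hcabs.le)
    have hsmall : ∀ m' n' : ℕ, m' + n' = N → m' ≤ M₁ →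
        fpa (s*(n':ℝ)^2) ≤ |(c:ℝ)| * ε n' → False := by
      intro m' n' hmn' hm'le hfpan'
      have hn'M₂ : M₂ ≤ n' := by omega
      have hεn' : ε n' < ρ/(2^(e+2)*|(c:ℝ)|) := hM₂ n' hn'M₂
      have hup : fpa (s*(n':ℝ)^2) < ρ/2^(e+2) := by
        have h6 := mul_lt_mul_of_pos_left hεn' hcabs
        have heq : |(c:ℝ)| * (ρ/(2^(e+2)*|(c:ℝ)|)) = ρ/2^(e+2) := by field_simp
        linarith
      have hglow : ρ ≤ fpa (2^e*s*(m':ℝ)^2 - 1/(2*s*2^e)) :=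
        Finset.inf'_le g (by simp only [Finset.mem_range]; omega)
      have hj1 : (0:ℝ) < (j:ℝ)+1 := by positivity
      have hfr : (2*(m':ℝ)+1)/((j:ℝ)+1) ≤ ρ/2 := by
        have hnum : (2*(m':ℝ)+1) ≤ 2*(M₁:ℝ)+1 := by
          have : (m':ℝ) ≤ M₁ := by exact_mod_cast hm'le
          linarith
        have hstep1 : (2*(m':ℝ)+1)/((j:ℝ)+1) ≤ (2*(M₁:ℝ)+1)/((j:ℝ)+1) :=
          (div_le_div_iff_of_pos_right hj1).mpr hnum
        have hstep2 : (2*(M₁:ℝ)+1)/((j:ℝ)+1) ≤ ρ/2 := by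
          rw [div_le_div_iff₀ hj1 (by norm_num)]
          rw [div_le_iff₀ hρ] at hjρ
          nlinarith
        linarith
      have hlow := hII m' n' hmn'
      have hmid : (ρ - ρ/2)/2^e ≤ fpa (s*(n':ℝ)^2) := by
        refine le_trans (div_le_div_of_nonneg_right ?_ h2e.le) hlow
        linarith
      have hcontra : ρ/2^(e+2) < (ρ - ρ/2)/2^e := by
        rw [div_lt_div_iff₀ (by positivity) (by positivity)]
        have hpow : (2:ℝ)^(e+2) = 2^e*4 := by rw [pow_add]; norm_num
        rw [hpow]
        nlinarith
      linarith
    by_cases hcase : M₁ ≤ m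
    · by_cases hcase2 : M₁ ≤ n
      · have h3 : ε m < δ/(4*|(c:ℝ)|) := hM₁ m hcase
        have h4 : ε n < δ/(4*|(c:ℝ)|) := hM₁ n hcase2
        have hIm := hI m n hmn
        have heq4 : |(c:ℝ)| * (δ/(4*|(c:ℝ)|)) = δ/4 := by field_simp
        have e1 : |(c:ℝ)| * ε m < δ/4 := by
          have h6 := mul_lt_mul_of_pos_left h3 hcabs
          linarith
        have e2 : |(c:ℝ)| * ε n < δ/4 := by
          have h6 := mul_lt_mul_of_pos_left h4 hcabs
          linarith
        linarith
      · exact hsmall n m (by omega) (by omega) hsm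
    · exact hsmall m n hmn (by omega) hsn
end
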